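/- arXiv:2406.12609 — 11 statements merged into one kernel-verified Lean document; each statement's English description precedes it below -/
import Mathlib

section
/- Let A be a clopen subset of 2^ω × 2^ω whose projection onto the first coordinate is all of 2^ω, and let M be a closed subset of 2^ω × 2^ω such that for every x ∈ 2^ω the vertical section M|_x = {y : (x,y) ∈ M} is nowhere dense in 2^ω. Then there exists a clopen set B ⊆ A \ M whose projection onto the first coordinate is all of 2^ω. -/
open Set Filter Topology MeasureTheory

abbrev Cantor : Type := ℕ → Bool

/-- Coordinatewise addition mod 2 on the Cantor space. -/
def cadd (s t : Cantor) : Cantor := fun n => xor (s n) (t n)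

/-- Translate of a set: `t ⊕ P`. -/
def tAdd (t : Cantor) (P : Set Cantor) : Set Cantor := (cadd t) '' P

/-- Vertical section of a subset of the plane `Cantor × Cantor`. -/
def sect (A : Set (Cantor × Cantor)) (x : Cantor) : Set Cantor := {y | (x, y) ∈ A}

/-- A set is Fσ if it is a countable union of closed sets. -/
def IsFSigma {Z : Type*} [TopologicalSpace Z] (s : Set Z) : Prop :=
  ∃ f : ℕ → Set Z, (∀ n, IsClosed (f n)) ∧ s = ⋃ n, f n

/-- The Hurewicz covering property for a subset of a topological space. -/
def Hurewicz {Z : Type*} [TopologicalSpace Z] (X : Set Z) : Prop :=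
  ∀ U : ℕ → Set (Set Z), (∀ n, (∀ u ∈ U n, IsOpen u) ∧ X ⊆ ⋃₀ U n) →
    ∃ F : ℕ → Set (Set Z), (∀ n, F n ⊆ U n ∧ (F n).Finite) ∧
      ∀ x ∈ X, ∀ᶠ n in atTop, x ∈ ⋃₀ F n

/-- The Menger covering property for a subset of a topological space. -/
def Menger {Z : Type*} [TopologicalSpace Z] (X : Set Z) : Prop :=
  ∀ U : ℕ → Set (Set Z), (∀ n, (∀ u ∈ U n, IsOpen u) ∧ X ⊆ ⋃₀ U n) →
    ∃ F : ℕ → Set (Set Z), (∀ n, F n ⊆ U n ∧ (F n).Finite) ∧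
      X ⊆ ⋃ n, ⋃₀ F n

/-- λ'-set: every countable set `A` of the ambient space is Gδ relative to `X ∪ A`. -/
def LambdaPrime {Z : Type*} [TopologicalSpace Z] (X : Set Z) : Prop :=
  ∀ A : Set Z, A.Countable → ∃ G : Set Z, IsGδ G ∧ (X ∪ A) ∩ G = A

/-- A set is totally imperfect if it contains no (nonempty) perfect subset. -/
def TotallyImperfect {Z : Type*} [TopologicalSpace Z] (X : Set Z) : Prop :=
  ∀ P : Set Z, P ⊆ X → Perfect P → P = ∅

/-- Perfectly meager in the transitive sense. -/
def PMT (X : Set Cantor) : Prop :=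
  ∀ P : Set Cantor, Perfect P → P.Nonempty →
    ∃ F : Set Cantor, IsSigmaCompact F ∧ X ⊆ F ∧
      ∀ t : Cantor, IsMeagre (Subtype.val ⁻¹' F : Set (tAdd t P))

/-- `μ` is the standard product (Haar) probability measure on the Cantor space. -/
def IsCantorMeasure (μ : Measure Cantor) : Prop :=
  ∀ s : Finset ℕ, ∀ f : ℕ → Bool,
    μ {x : Cantor | ∀ i ∈ s, x i = f i} = (1 / 2 : ENNReal) ^ s.card

/-- cov(N) with respect to a measure μ on the Cantor space. -/
noncomputable def covNull (μ : Measure Cantor) : Cardinal :=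
  sInf { c : Cardinal | ∃ S : Set (Set Cantor), Cardinal.mk S = c ∧
    (∀ A ∈ S, μ A = 0) ∧ ⋃₀ S = univ }

/-- cov(M) : least size of a family of meager sets covering the Cantor space. -/
noncomputable def covMeager : Cardinal :=
  sInf { c : Cardinal | ∃ S : Set (Set Cantor), Cardinal.mk S = c ∧
    (∀ A ∈ S, IsMeagre A) ∧ ⋃₀ S = univ }

/-- The bounding number b: least size of an unbounded family in (ω^ω, ≤*). -/
noncomputable def boundingNumber : Cardinal :=
  sInf { c : Cardinal | ∃ S : Set (ℕ → ℕ), Cardinal.mk S = c ∧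
    ¬ ∃ g : ℕ → ℕ, ∀ f ∈ S, ∀ᶠ n in atTop, f n ≤ g n }

theorem stmt0 (A M : Set (Cantor × Cantor))
    (hA : IsClopen A) (hAproj : Prod.fst '' A = univ)
    (hM : IsClosed M) (hMsect : ∀ x : Cantor, IsNowhereDense (sect M x)) :
    ∃ B : Set (Cantor × Cantor), IsClopen B ∧ B ⊆ A \ M ∧ Prod.fst '' B = univ := by
  have hAM : IsOpen (A \ M) := hA.isOpen.sdiff hM
  have key : ∀ x : Cantor, ∃ U V : Set Cantor, IsClopen U ∧ IsClopen V ∧ x ∈ U ∧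
      V.Nonempty ∧ U ×ˢ V ⊆ A \ M := by
    intro x
    -- find y with (x, y) ∈ A \ M
    obtain ⟨y, hyA⟩ : (sect A x).Nonempty := by
      have hx : x ∈ Prod.fst '' A := by rw [hAproj]; trivial
      obtain ⟨p, hp, hpx⟩ := hx
      exact ⟨p.2, by simpa [sect, ← hpx] using hp⟩
    have hopen : IsOpen (sect A x) :=
      hA.isOpen.preimage (Continuous.prodMk_right x)
    have hMclosed : IsClosed (sect M x) :=
      hM.preimage (Continuous.prodMk_right x)
    have hy : ∃ y, (x, y) ∈ A \ M := by
      by_contra h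
      push_neg at h
      have hsub : sect A x ⊆ sect M x := by
        intro z hz
        by_contra hz'
        exact h z ⟨hz, hz'⟩
      have : sect A x ⊆ interior (closure (sect M x)) := by
        rw [hMclosed.closure_eq]
        exact hopen.subset_interior_iff.mpr hsub
      rw [hMsect x] at this
      exact this hyA
    obtain ⟨y, hy⟩ := hy
    obtain ⟨U0, V0, hU0, hV0, hxU0, hyV0, hsub⟩ := isOpen_prod_iff.mp hAM x y hy
    obtain ⟨U, hUc, hxU, hUsub⟩ :=
      (isTopologicalBasis_isClopen (X := Cantor)).exists_subset_of_mem_open hxU0 hU0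
    obtain ⟨V, hVc, hyV, hVsub⟩ :=
      (isTopologicalBasis_isClopen (X := Cantor)).exists_subset_of_mem_open hyV0 hV0
    exact ⟨U, V, hUc, hVc, hxU, ⟨y, hyV⟩, fun p hp =>
      hsub ⟨hUsub hp.1, hVsub hp.2⟩⟩
  choose U V hUc hVc hxU hVne hsub using key
  obtain ⟨s, hs⟩ := isCompact_univ.elim_finite_subcover U (fun x => (hUc x).isOpen)
    (fun x _ => mem_iUnion.mpr ⟨x, hxU x⟩)
  refine ⟨⋃ i ∈ s, U i ×ˢ V i, ?_, ?_, ?_⟩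
  · exact isClopen_biUnion_finset (fun i _ => (hUc i).prod (hVc i))
  · intro p hp
    obtain ⟨i, _, hpi⟩ := mem_iUnion₂.mp hp
    exact hsub i hpi
  · apply eq_univ_of_forall
    intro x
    obtain ⟨i, hi, hxi⟩ := mem_iUnion₂.mp (hs (mem_univ x))
    obtain ⟨v, hv⟩ := hVne i
    exact ⟨(x, v), mem_iUnion₂.mpr ⟨i, hi, ⟨hxi, hv⟩⟩, rfl⟩
end

section
/- Let (M_n)_{n∈ω} be an increasing sequence of closed subsets of 2^ω × 2^ω such that for every n and every x ∈ 2^ω the vertical section M_n|_x is nowhere dense in 2^ω. Then there exists a compact set D ⊆ 2^ω × 2^ω disjoint from ⋃_n M_n whose projection onto the first coordinate is all of 2^ω. -/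
open Set Filter Topology MeasureTheory

lemma shrink (K M : Set (Cantor × Cantor)) (hKo : IsOpen K)
    (hKs : ∀ x, (sect K x).Nonempty) (hMc : IsClosed M)
    (hMs : ∀ x, IsNowhereDense (sect M x)) :
    ∃ K', IsCompact K' ∧ IsOpen K' ∧ K' ⊆ K ∧ Disjoint K' M ∧ ∀ x, (sect K' x).Nonempty := by
  have key : ∀ x : Cantor, ∃ U V : Set Cantor, IsClopen U ∧ IsClopen V ∧ x ∈ U ∧
      V.Nonempty ∧ U ×ˢ V ⊆ K \ M := by
    intro x
    -- find y in sect K x not in closure of sect M x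
    have hKox : IsOpen (sect K x) := hKo.preimage (Continuous.prodMk_right x)
    have hy : ∃ y, y ∈ sect K x ∧ y ∉ closure (sect M x) := by
      by_contra h
      push_neg at h
      have hsub : sect K x ⊆ interior (closure (sect M x)) :=
        hKox.subset_interior_iff.mpr h
      rw [hMs x] at hsub
      exact (hKs x).ne_empty (subset_empty_iff.mp hsub)
    obtain ⟨y, hyK, hyM⟩ := hy
    have hxy : (x, y) ∈ K \ M := ⟨hyK, fun h => hyM (subset_closure h)⟩
    have hopen : IsOpen (K \ M) := hKo.sdiff hMc
    rw [isOpen_prod_iff] at hopen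
    obtain ⟨U, V, hU, hV, hxU, hyV, hUV⟩ := hopen x y hxy
    obtain ⟨U', hU', hxU', hU'U⟩ := compact_exists_isClopen_in_isOpen hU hxU
    obtain ⟨V', hV', hyV', hV'V⟩ := compact_exists_isClopen_in_isOpen hV hyV
    exact ⟨U', V', hU', hV', hxU', ⟨y, hyV'⟩,
      fun p hp => hUV ⟨hU'U hp.1, hV'V hp.2⟩⟩
  choose U V hU hV hxU hVne hUV using key
  have hcov : (univ : Set Cantor) ⊆ ⋃ x, U x := fun x _ => mem_iUnion.mpr ⟨x, hxU x⟩
  obtain ⟨t, ht⟩ := isCompact_univ.elim_finite_subcover U (fun x => (hU x).2) hcov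
  refine ⟨⋃ x ∈ t, U x ×ˢ V x, ?_, ?_, ?_, ?_, ?_⟩
  · exact t.isCompact_biUnion fun x _ =>
      ((hU x).1.isCompact).prod ((hV x).1.isCompact)
  · exact isOpen_biUnion fun x _ => ((hU x).2).prod ((hV x).2)
  · refine iUnion₂_subset fun x _ => (hUV x).trans diff_subset
  · rw [Set.disjoint_left]
    rintro p hp hpM
    obtain ⟨x, -, hpx⟩ := mem_iUnion₂.mp hp
    exact (hUV x hpx).2 hpM
  · intro x
    obtain ⟨i, hit, hxUi⟩ := mem_iUnion₂.mp (ht (mem_univ x))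
    obtain ⟨y, hyV⟩ := hVne i
    exact ⟨y, mem_biUnion hit ⟨hxUi, hyV⟩⟩

theorem stmt1 (M : ℕ → Set (Cantor × Cantor))
    (hmono : Monotone M) (hcl : ∀ n, IsClosed (M n))
    (hsect : ∀ n, ∀ x : Cantor, IsNowhereDense (sect (M n) x)) :
    ∃ D : Set (Cantor × Cantor), IsCompact D ∧ Disjoint D (⋃ n, M n) ∧
      Prod.fst '' D = univ := by
  -- build sequence of clopen sets
  have step : ∀ n (K : Set (Cantor × Cantor)), IsOpen K → (∀ x, (sect K x).Nonempty) →
      ∃ K', IsCompact K' ∧ IsOpen K' ∧ K' ⊆ K ∧ Disjoint K' (M n) ∧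
        ∀ x, (sect K' x).Nonempty :=
    fun n K hKo hKs => shrink K (M n) hKo hKs (hcl n) (hsect n)
  -- define D recursively
  have : ∃ D : ℕ → Set (Cantor × Cantor), (∀ n, IsCompact (D n) ∧ IsOpen (D n) ∧
      Disjoint (D n) (M n) ∧ (∀ x, (sect (D n) x).Nonempty)) ∧
      ∀ n, D (n + 1) ⊆ D n := by
    have h0 := step 0 univ isOpen_univ (fun x => ⟨fun _ => false, mem_univ _⟩)
    choose D0 h0c h0o _ h0d h0s using h0
    have hrec : ∀ n (K : Set (Cantor × Cantor)), (IsCompact K ∧ IsOpen K ∧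
        Disjoint K (M n) ∧ (∀ x, (sect K x).Nonempty)) →
        ∃ K', (IsCompact K' ∧ IsOpen K' ∧ Disjoint K' (M (n+1)) ∧
          (∀ x, (sect K' x).Nonempty)) ∧ K' ⊆ K := by
      intro n K hK
      obtain ⟨K', h1, h2, h3, h4, h5⟩ := step (n+1) K hK.2.1 hK.2.2.2
      exact ⟨K', ⟨h1, h2, h4, h5⟩, h3⟩
    choose! f hf hfs using hrec
    set D : ℕ → Set (Cantor × Cantor) := fun n => Nat.rec D0 f n with hDdef
    have hinv : ∀ n, IsCompact (D n) ∧ IsOpen (D n) ∧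
        Disjoint (D n) (M n) ∧ (∀ x, (sect (D n) x).Nonempty) := by
      intro n
      induction n with
      | zero => exact ⟨h0c, h0o, h0d, h0s⟩
      | succ k ih => exact hf k _ ih
    exact ⟨D, hinv, fun n => hfs n (D n) (hinv n)⟩
  obtain ⟨D, hD, hDmono⟩ := this
  refine ⟨⋂ n, D n, ?_, ?_, ?_⟩
  · exact (isClosed_iInter fun n => (hD n).1.isClosed).isCompact
  · rw [disjoint_iUnion_right]
    exact fun n => ((hD n).2.2.1.mono_left (iInter_subset D n))
  · ext x
    simp only [mem_image, mem_univ, iff_true]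
    have : (⋂ n, sect (D n) x).Nonempty := by
      apply IsCompact.nonempty_iInter_of_sequence_nonempty_isCompact_isClosed
        (fun n => sect (D n) x)
      · intro n y hy
        exact hDmono n hy
      · exact fun n => (hD n).2.2.2 x
      · exact ((hD 0).1.isClosed.preimage (Continuous.prodMk_right x)).isCompact
      · exact fun n => (hD n).1.isClosed.preimage (Continuous.prodMk_right x)
    obtain ⟨y, hy⟩ := this
    exact ⟨(x, y), by simpa [sect, mem_iInter] using hy, rfl⟩
end

section
/- Let (M_n)_{n∈ω} be an increasing sequence of closed subsets of 2^ω × 2^ω such that for every n and every x ∈ 2^ω the vertical section M_n|_x is nowhere dense in 2^ω. Then there exists a σ-compact set D ⊆ 2^ω × 2^ω disjoint from ⋃_n M_n such that for every x ∈ 2^ω the section D|_x is dense in 2^ω. -/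
open Set Filter Topology MeasureTheory

section Stmt2Aux
open PiNat

namespace Stmt2Aux

lemma isClosed_cyl (x : Cantor) (n : ℕ) : IsClosed (PiNat.cylinder x n) := by
  rw [cylinder_eq_pi]; exact isClosed_set_pi fun a _ => isClosed_discrete _

/-- `σ x` depends only on the first `L` coordinates of `x`. -/
def depOn (L : ℕ) (σ : Cantor → Cantor) : Prop :=
  ∀ x x', x' ∈ PiNat.cylinder x L → σ x' = σ x

def avoidP (A : Set (Cantor × Cantor)) (L ℓ : ℕ) (σ : Cantor → Cantor) : Prop :=
  ∀ x x' y, x' ∈ PiNat.cylinder x L → y ∈ PiNat.cylinder (σ x) ℓ → (x', y) ∉ A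

lemma exists_cyl_subset {U : Set Cantor} (hU : IsOpen U) {y : Cantor} (hy : y ∈ U) :
    ∃ m, PiNat.cylinder y m ⊆ U := by
  obtain ⟨v, ⟨z, n, rfl⟩, hyv, hvU⟩ :=
    (isTopologicalBasis_cylinders (fun _ : ℕ => Bool)).exists_subset_of_mem_open hy hU
  exact ⟨n, by rw [(mem_cylinder_iff_eq).1 hyv]; exact hvU⟩

lemma pointwise (A : Set (Cantor × Cantor)) (hA : IsClosed A)
    (hnd : ∀ x, IsNowhereDense (sect A x)) (L ℓ : ℕ) (z : Cantor) (x : Cantor) :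
    ∃ y m k, ℓ < m ∧ L ≤ k ∧ y ∈ PiNat.cylinder z ℓ ∧
      ∀ x' y', x' ∈ PiNat.cylinder x k → y' ∈ PiNat.cylinder y m → (x', y') ∉ A := by
  have hsc : IsClosed (sect A x) := hA.preimage (Continuous.prodMk_right x)
  have hdense : Dense (sect A x)ᶜ := by
    rw [← interior_eq_empty_iff_dense_compl]
    have := hnd x
    unfold IsNowhereDense at this
    rwa [hsc.closure_eq] at this
  obtain ⟨y, hyc, hycyl⟩ := hdense.exists_mem_open (isOpen_cylinder (fun _ => Bool) z ℓ)
    ⟨z, self_mem_cylinder z ℓ⟩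
  obtain ⟨m₀, hm₀⟩ := exists_cyl_subset (hsc.isOpen_compl) hyc
  set m := max m₀ (ℓ + 1) with hm
  have hsub : ({x} ×ˢ PiNat.cylinder y m : Set (Cantor × Cantor)) ⊆ Aᶜ := by
    rintro ⟨x', y'⟩ ⟨hx', hy'⟩
    simp only [mem_singleton_iff] at hx'
    subst hx'
    exact hm₀ (cylinder_anti y (le_max_left _ _) hy')
  obtain ⟨u, v, huo, hvo, hxu, hyv, huv⟩ := generalized_tube_lemma isCompact_singleton
    ((isClosed_cyl y m).isCompact) hA.isOpen_compl hsub
  obtain ⟨k₀, hk₀⟩ := exists_cyl_subset huo (hxu rfl)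
  refine ⟨y, m, max k₀ L, lt_of_lt_of_le (Nat.lt_succ_self ℓ) (le_max_right _ _),
    le_max_right _ _, hycyl, ?_⟩
  intro x' y' hx' hy'
  exact huv (mk_mem_prod (hk₀ (cylinder_anti x (le_max_left _ _) hx')) (hyv hy'))

lemma find?_congr {α : Type*} (l : List α) (p q : α → Bool) (h : ∀ a ∈ l, p a = q a) :
    l.find? p = l.find? q := by
  induction l with
  | nil => rfl
  | cons a l ih =>
    have ha := h a (List.mem_cons_self)
    cases hpa : p a with
    | true =>
      rw [List.find?_cons_of_pos hpa, List.find?_cons_of_pos (ha ▸ hpa)]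
    | false =>
      rw [List.find?_cons_of_neg (by simp [hpa]), List.find?_cons_of_neg (by simp [← ha, hpa])]
      exact ih fun a ha => h a (List.mem_cons_of_mem _ ha)

def Extend (A : Set (Cantor × Cantor)) (d d' : ℕ × ℕ × (Cantor → Cantor)) : Prop :=
  d.1 ≤ d'.1 ∧ d.2.1 < d'.2.1 ∧ depOn d'.1 d'.2.2 ∧
    (∀ x, d'.2.2 x ∈ PiNat.cylinder (d.2.2 x) d.2.1) ∧ avoidP A d'.1 d'.2.1 d'.2.2

lemma step (A : Set (Cantor × Cantor)) (hA : IsClosed A)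
    (hnd : ∀ x, IsNowhereDense (sect A x)) (d : ℕ × ℕ × (Cantor → Cantor))
    (hdep : depOn d.1 d.2.2) : ∃ d', Extend A d d' := by
  classical
  obtain ⟨L, ℓ, σ⟩ := d
  simp only [depOn] at hdep
  choose y m k hm hk hy hav using fun x => pointwise A hA hnd L ℓ (σ x) x
  -- finite subcover
  obtain ⟨T, hT⟩ := isCompact_univ.elim_finite_subcover (fun x => PiNat.cylinder x (k x))
    (fun x => isOpen_cylinder (fun _ => Bool) x (k x)) (fun x _ => mem_iUnion.2 ⟨x, self_mem_cylinder x (k x)⟩)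
  set L' := T.sup k ⊔ L with hL'
  set ℓ' := T.sup m ⊔ (ℓ + 1) with hℓ'
  set p : Cantor → Cantor → Bool := fun x t => decide (x ∈ PiNat.cylinder t (k t)) with hp
  set σ' : Cantor → Cantor := fun x => ((T.toList.find? (p x)).elim (fun _ => false) y) with hσ'
  have hfind : ∀ x : Cantor, ∃ t, T.toList.find? (p x) = some t ∧ t ∈ T ∧
      x ∈ PiNat.cylinder t (k t) := by
    intro x
    have : ∃ t ∈ T.toList, p x t = true := by
      obtain ⟨t, htT, hxt⟩ := mem_iUnion₂.1 (hT (mem_univ x))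
      exact ⟨t, Finset.mem_toList.2 htT, by simp only [hp, decide_eq_true_eq]; exact hxt⟩
    obtain ⟨t, ht⟩ := Option.isSome_iff_exists.1 (List.find?_isSome.2 this)
    refine ⟨t, ht, Finset.mem_toList.1 (List.mem_of_find?_eq_some ht), ?_⟩
    have := List.find?_some ht
    simpa [hp] using this
  -- key: find? only depends on first L' coords
  have hfc : ∀ x x', x' ∈ PiNat.cylinder x L' → T.toList.find? (p x') = T.toList.find? (p x) := by
    intro x x' hx'
    apply find?_congr
    intro t htl
    have hkt : k t ≤ L' := le_trans (Finset.le_sup (Finset.mem_toList.1 htl)) le_sup_left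
    simp only [hp, decide_eq_decide, mem_cylinder_iff]
    constructor <;> intro h i hi
    · rw [← hx' i (lt_of_lt_of_le hi hkt)]; exact h i hi
    · rw [hx' i (lt_of_lt_of_le hi hkt)]; exact h i hi
  have hdep' : depOn L' σ' := by
    intro x x' hx'
    simp only [hσ', hfc x x' hx']
  have hσ't : ∀ x t, T.toList.find? (p x) = some t → σ' x = y t := by
    intro x t ht; simp [hσ', ht]
  refine ⟨(L', ℓ', σ'), le_sup_right, lt_of_lt_of_le (Nat.lt_succ_self ℓ) le_sup_right,
    hdep', ?_, ?_⟩
  · -- agreement: σ' x ∈ PiNat.cylinder (σ x) ℓ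
    intro x
    show σ' x ∈ PiNat.cylinder (σ x) ℓ
    obtain ⟨t, ht, htT, hxt⟩ := hfind x
    rw [hσ't x t ht]
    have hLkt : L ≤ k t := hk t
    have hσeq : σ x = σ t := hdep t x (cylinder_anti t hLkt hxt)
    rw [hσeq]
    exact hy t
  · -- avoid
    intro x x' yy hx' hyy hmem
    change x' ∈ PiNat.cylinder x L' at hx'
    change yy ∈ PiNat.cylinder (σ' x) ℓ' at hyy
    obtain ⟨t, ht, htT, hxt⟩ := hfind x
    have hσ'x : σ' x = y t := hσ't x t ht
    have hkt : k t ≤ L' := le_trans (Finset.le_sup htT) le_sup_left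
    have hmt : m t ≤ ℓ' := le_trans (Finset.le_sup htT) le_sup_left
    refine hav t x' yy ?_ ?_ hmem
    · intro i hi
      rw [hx' i (lt_of_lt_of_le hi hkt)]
      exact hxt i hi
    · intro i hi
      have := hyy i (lt_of_lt_of_le hi hmt)
      rwa [hσ'x] at this

end Stmt2Aux

namespace Stmt2Aux

lemma depOn.cont {L : ℕ} {σ : Cantor → Cantor} (h : depOn L σ) (i : ℕ) :
    Continuous fun x => σ x i := by
  apply IsLocallyConstant.continuous
  rw [IsLocallyConstant.iff_exists_open]
  intro x
  exact ⟨PiNat.cylinder x L, isOpen_cylinder (fun _ => Bool) x L, self_mem_cylinder x L,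
    fun x' hx' => by rw [h x x' hx']⟩

variable (M : ℕ → Set (Cantor × Cantor))

noncomputable def seq (hcl : ∀ n, IsClosed (M n))
    (hsect : ∀ n, ∀ x : Cantor, IsNowhereDense (sect (M n) x)) (b : Cantor) (n₀ : ℕ) :
    ℕ → {d : ℕ × ℕ × (Cantor → Cantor) // depOn d.1 d.2.2}
  | 0 => ⟨(0, n₀, fun _ => b), fun _ _ _ => rfl⟩
  | n + 1 =>
    ⟨Classical.choose (step (M (n+1)) (hcl (n+1)) (hsect (n+1)) (seq hcl hsect b n₀ n).1
        (seq hcl hsect b n₀ n).2),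
      (Classical.choose_spec (step (M (n+1)) (hcl (n+1)) (hsect (n+1)) (seq hcl hsect b n₀ n).1
        (seq hcl hsect b n₀ n).2)).2.2.1⟩

variable (hcl : ∀ n, IsClosed (M n))
    (hsect : ∀ n, ∀ x : Cantor, IsNowhereDense (sect (M n) x)) (b : Cantor) (n₀ : ℕ)

lemma seq_spec (n : ℕ) :
    Extend (M (n+1)) (seq M hcl hsect b n₀ n).1 (seq M hcl hsect b n₀ (n+1)).1 := by
  rw [seq]
  exact Classical.choose_spec _

/-- length sequence -/
noncomputable abbrev ℓseq (n : ℕ) : ℕ := (seq M hcl hsect b n₀ n).1.2.1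
noncomputable abbrev σseq (n : ℕ) : Cantor → Cantor := (seq M hcl hsect b n₀ n).1.2.2

lemma ℓseq_mono : Monotone (ℓseq M hcl hsect b n₀) :=
  monotone_nat_of_le_succ fun n => le_of_lt (seq_spec M hcl hsect b n₀ n).2.1

lemma le_ℓseq (n : ℕ) : n ≤ ℓseq M hcl hsect b n₀ n := by
  induction n with
  | zero => exact Nat.zero_le _
  | succ n ih => exact Nat.lt_of_le_of_lt ih (seq_spec M hcl hsect b n₀ n).2.1

lemma seq_coh {m n : ℕ} (h : m ≤ n) (x : Cantor) :
    σseq M hcl hsect b n₀ n x ∈ PiNat.cylinder (σseq M hcl hsect b n₀ m x) (ℓseq M hcl hsect b n₀ m) := by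
  induction n, h using Nat.le_induction with
  | base => exact self_mem_cylinder _ _
  | succ n hmn ih =>
    intro i hi
    have h1 := (seq_spec M hcl hsect b n₀ n).2.2.2.1 x i
      (lt_of_lt_of_le hi (ℓseq_mono M hcl hsect b n₀ hmn))
    exact h1.trans (ih i hi)

/-- The compact set with prescribed base PiNat.cylinder. -/
def CC : Set (Cantor × Cantor) :=
  {q | ∀ n, q.2 ∈ PiNat.cylinder (σseq M hcl hsect b n₀ n q.1) (ℓseq M hcl hsect b n₀ n)}

lemma CC_compact : IsCompact (CC M hcl hsect b n₀) := by
  apply IsClosed.isCompact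
  have : CC M hcl hsect b n₀ = ⋂ (n : ℕ), ⋂ (i : ℕ), ⋂ (_ : i < ℓseq M hcl hsect b n₀ n),
      {q : Cantor × Cantor | q.2 i = σseq M hcl hsect b n₀ n q.1 i} := by
    ext q
    simp only [CC, mem_setOf_eq, mem_cylinder_iff, mem_iInter]
  rw [this]
  refine isClosed_iInter fun n => isClosed_iInter fun i => isClosed_iInter fun _ => ?_
  exact isClosed_eq ((continuous_apply i).comp continuous_snd)
    (((seq M hcl hsect b n₀ n).2.cont i).comp continuous_fst)

lemma CC_section (x : Cantor) :
    ∃ y : Cantor, (x, y) ∈ CC M hcl hsect b n₀ ∧ y ∈ PiNat.cylinder b n₀ := by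
  set y : Cantor := fun i => σseq M hcl hsect b n₀ (i+1) x i with hy
  have hmem : ∀ n, y ∈ PiNat.cylinder (σseq M hcl hsect b n₀ n x) (ℓseq M hcl hsect b n₀ n) := by
    intro n i hi
    rcases le_total (i+1) n with h | h
    · exact (seq_coh M hcl hsect b n₀ h x i
        (lt_of_lt_of_le (Nat.lt_succ_self i) (le_ℓseq M hcl hsect b n₀ (i+1)))).symm
    · exact seq_coh M hcl hsect b n₀ h x i hi
  refine ⟨y, hmem, ?_⟩
  have h0 := hmem 0
  have hσ0 : σseq M hcl hsect b n₀ 0 x = b := rfl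
  have hℓ0 : ℓseq M hcl hsect b n₀ 0 = n₀ := rfl
  rw [hσ0, hℓ0] at h0
  exact h0

lemma CC_disj (hmono : Monotone M) (m : ℕ) {q : Cantor × Cantor}
    (hq : q ∈ CC M hcl hsect b n₀) : q ∉ M m := by
  intro hqm
  have hav := (seq_spec M hcl hsect b n₀ m).2.2.2.2
  exact hav q.1 q.1 q.2 (self_mem_cylinder _ _) (hq (m+1)) (hmono (Nat.le_succ m) hqm)

end Stmt2Aux


end Stmt2Aux

theorem stmt2 (M : ℕ → Set (Cantor × Cantor))
    (hmono : Monotone M) (hcl : ∀ n, IsClosed (M n))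
    (hsect : ∀ n, ∀ x : Cantor, IsNowhereDense (sect (M n) x)) :
    ∃ D : Set (Cantor × Cantor), IsSigmaCompact D ∧ Disjoint D (⋃ n, M n) ∧
      ∀ x : Cantor, Dense (sect D x) := by
  classical
  refine ⟨⋃ (l : List Bool), Stmt2Aux.CC M hcl hsect (fun i => l.getD i false) l.length,
    ?_, ?_, ?_⟩
  · exact isSigmaCompact_iUnion_of_isCompact _ fun l => Stmt2Aux.CC_compact M hcl hsect _ _
  · rw [Set.disjoint_left]
    intro q hq hq2
    obtain ⟨l, hl⟩ := mem_iUnion.1 hq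
    obtain ⟨n, hn⟩ := mem_iUnion.1 hq2
    exact Stmt2Aux.CC_disj M hcl hsect _ _ hmono n hl hn
  · intro x
    rw [dense_iff_inter_open]
    rintro U hU ⟨z, hz⟩
    obtain ⟨n, hn⟩ := Stmt2Aux.exists_cyl_subset hU hz
    set l : List Bool := List.ofFn (fun i : Fin n => z i) with hldef
    obtain ⟨y, hyC, hycyl⟩ :=
      Stmt2Aux.CC_section M hcl hsect (fun i => l.getD i false) l.length x
    refine ⟨y, hn ?_, mem_iUnion.2 ⟨l, hyC⟩⟩
    intro i hi
    have hilen : i < l.length := by simpa [hldef] using hi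
    have h1 : y i = l.getD i false := hycyl i hilen
    rw [h1, List.getD_eq_getElem _ _ hilen]
    simp [hldef]
end

section
/- Let O be an open subset of 2^ω × 2^ω such that for every x ∈ 2^ω the vertical section O|_x has Lebesgue (Haar) measure 1 in 2^ω. Then for every real number a ∈ (0,1) there exists a compact set K ⊆ O such that for every x ∈ 2^ω the section K|_x has measure greater than 1 − a. -/
open Set Filter Topology MeasureTheory

theorem stmt3 (μ : Measure Cantor) (hμ : IsCantorMeasure μ)
    (O : Set (Cantor × Cantor)) (hO : IsOpen O)
    (hOsect : ∀ x : Cantor, μ (sect O x) = 1)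
    (a : ℝ) (ha : a ∈ Set.Ioo (0 : ℝ) 1) :
    ∃ K : Set (Cantor × Cantor), IsCompact K ∧ K ⊆ O ∧
      ∀ x : Cantor, μ (sect K x) > ENNReal.ofReal (1 - a) := by
  have hprob : IsProbabilityMeasure μ := ⟨by simpa using hμ ∅ (fun _ => false)⟩
  obtain ⟨ha0, ha1⟩ := ha
  have hlt : ENNReal.ofReal (1 - a) < 1 := by
    rw [show (1 : ENNReal) = ENNReal.ofReal 1 by simp]
    exact ENNReal.ofReal_lt_ofReal_iff_of_nonneg (by linarith) |>.mpr (by linarith)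
  have key : ∀ x : Cantor, ∃ V : Set Cantor, ∃ L : Set Cantor, IsClopen V ∧ x ∈ V ∧
      IsCompact L ∧ ENNReal.ofReal (1 - a) < μ L ∧ V ×ˢ L ⊆ O := by
    intro x
    have hopen : IsOpen (sect O x) := hO.preimage (Continuous.prodMk_right x)
    have hμlt : ENNReal.ofReal (1 - a) < μ (sect O x) := by rw [hOsect x]; exact hlt
    obtain ⟨L, hLsub, hLc, hLμ⟩ := hopen.exists_lt_isCompact hμlt
    have hsub : ({x} : Set Cantor) ×ˢ L ⊆ O := by
      rintro ⟨x', y⟩ ⟨hx', hy⟩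
      simp only [mem_singleton_iff] at hx'
      subst hx'; exact hLsub hy
    obtain ⟨u, v, hu, hv, hxu, hLv, huv⟩ :=
      generalized_tube_lemma isCompact_singleton hLc hO hsub
    obtain ⟨V, hVclopen, hxV, hVu⟩ :=
      compact_exists_isClopen_in_isOpen hu (hxu rfl)
    exact ⟨V, L, hVclopen, hxV, hLc, hLμ,
      fun p hp => huv ⟨hVu hp.1, hLv hp.2⟩⟩
  choose V L hVclopen hxV hLc hLμ hVL using key
  obtain ⟨t, ht⟩ := IsCompact.elim_finite_subcover isCompact_univ V
    (fun x => (hVclopen x).isOpen) (fun x _ => mem_iUnion.mpr ⟨x, hxV x⟩)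
  refine ⟨⋃ i ∈ t, V i ×ˢ L i, ?_, ?_, ?_⟩
  · exact t.finite_toSet.isCompact_biUnion fun i _ =>
      ((hVclopen i).isClosed.isCompact).prod (hLc i)
  · intro p hp
    simp only [mem_iUnion] at hp
    obtain ⟨i, _, hpi⟩ := hp
    exact hVL i hpi
  · intro x
    obtain ⟨i, hit, hxi⟩ := mem_iUnion₂.mp (ht (mem_univ x))
    have hmono : L i ⊆ sect (⋃ i ∈ t, V i ×ˢ L i) x := by
      intro y hy
      exact mem_iUnion₂.mpr ⟨i, hit, ⟨hxi, hy⟩⟩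
    exact lt_of_lt_of_le (hLμ i) (μ.mono hmono)
end

section
/- Let G be a G_δ subset of 2^ω × 2^ω such that for every x ∈ 2^ω the vertical section G|_x has measure 1 in 2^ω. Then for every real number a ∈ (0,1) there exists a compact set K ⊆ G such that μ(K|_x) > 1 − a for every x ∈ 2^ω. Consequently, there exists a σ-compact set F ⊆ G such that μ(F|_x) = 1 for every x ∈ 2^ω. -/
open Set Filter Topology MeasureTheory

lemma sect_open {U : Set (Cantor × Cantor)} (hU : IsOpen U) (x : Cantor) :
    IsOpen (sect U x) := hU.preimage (Continuous.prodMk_right x)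

lemma sect_closed {U : Set (Cantor × Cantor)} (hU : IsClosed U) (x : Cantor) :
    IsClosed (sect U x) := hU.preimage (Continuous.prodMk_right x)

lemma level (μ : Measure Cantor) [μ.Regular]
    (U : Set (Cantor × Cantor)) (hU : IsOpen U)
    (hsect : ∀ x, μ (sect U x) = 1) (ε : ENNReal) (hε : 0 < ε) :
    ∃ C : Set (Cantor × Cantor), IsClosed C ∧ C ⊆ U ∧ ∀ x, 1 - ε ≤ μ (sect C x) := by
  have key : ∀ x : Cantor, ∃ N D : Set Cantor, IsClopen N ∧ x ∈ N ∧ IsCompact D ∧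
      N ×ˢ D ⊆ U ∧ 1 - ε ≤ μ D := by
    intro x
    have hlt : (1 : ENNReal) - ε < μ (sect U x) := by
      rw [hsect x]
      exact ENNReal.sub_lt_self ENNReal.one_ne_top one_ne_zero hε.ne'
    obtain ⟨D, hDU, hDc, hDm⟩ := (sect_open hU x).exists_lt_isCompact hlt
    have hxD : {x} ×ˢ D ⊆ U := by
      rintro ⟨p1, p2⟩ ⟨hp1, hp2⟩
      rcases hp1 with rfl
      exact hDU hp2
    obtain ⟨u, v, hu, hv, hxu, hDv, huv⟩ :=
      generalized_tube_lemma isCompact_singleton hDc hU hxD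
    obtain ⟨N, hN, hxN, hNu⟩ := compact_exists_isClopen_in_isOpen hu (hxu rfl)
    exact ⟨N, D, hN, hxN, hDc, fun p hp => huv ⟨hNu hp.1, hDv hp.2⟩, hDm.le⟩
  choose N D hN hxN hD hsub hm using key
  obtain ⟨t, ht⟩ := isCompact_univ.elim_finite_subcover N (fun x => (hN x).2)
    (fun x _ => mem_iUnion.2 ⟨x, hxN x⟩)
  refine ⟨⋃ i ∈ t, N i ×ˢ D i, ?_, ?_, ?_⟩
  · exact t.finite_toSet.isClosed_biUnion fun i _ => ((hN i).1.prod (hD i).isClosed)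
  · exact iUnion₂_subset fun i _ => hsub i
  · intro x
    obtain ⟨i, hit, hxi⟩ := mem_iUnion₂.1 (ht (mem_univ x))
    refine (hm i).trans (measure_mono ?_)
    intro y hy
    exact mem_iUnion₂.2 ⟨i, hit, hxi, hy⟩

lemma compactPart (μ : Measure Cantor) [μ.Regular] (h1 : μ Set.univ = 1)
    (G : Set (Cantor × Cantor)) (hG : IsGδ G)
    (hGsect : ∀ x : Cantor, μ (sect G x) = 1)
    (a : ℝ) (ha : a ∈ Set.Ioo (0 : ℝ) 1) :
    ∃ K : Set (Cantor × Cantor), IsCompact K ∧ K ⊆ G ∧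
      ∀ x : Cantor, μ (sect K x) > ENNReal.ofReal (1 - a) := by
  obtain ⟨U, hUo, hGU⟩ := hG.eq_iInter_nat
  have hUsect : ∀ n x, μ (sect (U n) x) = 1 := by
    intro n x
    refine le_antisymm (h1 ▸ measure_mono (subset_univ _)) ?_
    rw [← hGsect x]
    refine measure_mono fun y hy => ?_
    rw [hGU] at hy
    exact mem_iInter.1 hy n
  set ε := ENNReal.ofReal (a / 2) with hεdef
  have hε0 : 0 < ε := ENNReal.ofReal_pos.2 (by linarith [ha.1])
  have hεn : ∀ n : ℕ, 0 < ε * 2⁻¹ ^ (n + 1) := fun n =>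
    ENNReal.mul_pos hε0.ne' (pow_ne_zero _ (by simp))
  choose C hCc hCU hCm using fun n =>
    level μ (U n) (hUo n) (hUsect n) (ε * 2⁻¹ ^ (n + 1)) (hεn n)
  refine ⟨⋂ n, C n, (isClosed_iInter hCc).isCompact, ?_, ?_⟩
  · rw [hGU]; exact iInter_mono hCU
  · intro x
    set A := fun n => sect (C n) x with hA
    have hsectK : sect (⋂ n, C n) x = ⋂ n, A n := by
      ext y; simp [sect, hA]
    have hAm : ∀ n, MeasurableSet (A n) := fun n => (sect_closed (hCc n) x).measurableSet
    have hfin : ∀ s : Set Cantor, μ s ≠ ⊤ := fun s =>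
      ((measure_mono (subset_univ _)).trans_lt (h1 ▸ ENNReal.one_lt_top)).ne
    have hAc : ∀ n, μ (A n)ᶜ ≤ ε * 2⁻¹ ^ (n + 1) := by
      intro n
      rw [measure_compl (hAm n) (hfin _), h1]
      exact tsub_le_iff_right.2 (tsub_le_iff_left.1 (hCm n x))
    have hsum : ∑' n : ℕ, ε * 2⁻¹ ^ (n + 1) = ε := by
      rw [ENNReal.tsum_mul_left]
      have h2 : ∑' n : ℕ, (2⁻¹ : ENNReal) ^ (n + 1) = 1 := by
        simp only [pow_succ]
        rw [ENNReal.tsum_mul_right, ENNReal.tsum_geometric, ENNReal.one_sub_inv_two, inv_inv]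
        exact ENNReal.mul_inv_cancel two_ne_zero ENNReal.ofNat_ne_top
      rw [h2, mul_one]
    have hcompl : μ ((⋂ n, A n)ᶜ) ≤ ε := by
      rw [compl_iInter]
      exact (measure_iUnion_le _).trans (hsum ▸ ENNReal.tsum_le_tsum hAc)
    have hK : 1 - ε ≤ μ (sect (⋂ n, C n) x) := by
      rw [hsectK]
      have hmeq : μ (⋂ n, A n) = 1 - μ ((⋂ n, A n)ᶜ) := by
        conv_lhs => rw [← compl_compl (⋂ n, A n)]
        rw [measure_compl (MeasurableSet.iInter hAm).compl (hfin _), h1]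
      rw [hmeq]
      exact tsub_le_tsub_left hcompl 1
    refine lt_of_lt_of_le ?_ hK
    have heq : (1 : ENNReal) - ε = ENNReal.ofReal (1 - a / 2) := by
      rw [hεdef, ENNReal.ofReal_sub 1 (by linarith [ha.1]), ENNReal.ofReal_one]
    rw [heq]
    exact (ENNReal.ofReal_lt_ofReal_iff (by linarith [ha.2])).2 (by linarith [ha.1])

theorem stmt4 (μ : Measure Cantor) (hμ : IsCantorMeasure μ)
    (G : Set (Cantor × Cantor)) (hG : IsGδ G)
    (hGsect : ∀ x : Cantor, μ (sect G x) = 1) :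
    (∀ a : ℝ, a ∈ Set.Ioo (0 : ℝ) 1 →
      ∃ K : Set (Cantor × Cantor), IsCompact K ∧ K ⊆ G ∧
        ∀ x : Cantor, μ (sect K x) > ENNReal.ofReal (1 - a)) ∧
    (∃ F : Set (Cantor × Cantor), IsSigmaCompact F ∧ F ⊆ G ∧
      ∀ x : Cantor, μ (sect F x) = 1) := by
  
  have h1 : μ Set.univ = 1 := by simpa using hμ ∅ (fun _ => false)
  haveI : IsFiniteMeasure μ := ⟨by rw [h1]; exact ENNReal.one_lt_top⟩
  constructor
  · intro a ha
    exact compactPart μ h1 G hG hGsect a ha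
  · choose K hKc hKG hKm using fun k : ℕ =>
      compactPart μ h1 G hG hGsect (1 / ((k : ℝ) + 2))
        ⟨by positivity, by
          rw [div_lt_one (by positivity)]
          linarith [Nat.cast_nonneg (α := ℝ) k]⟩
    refine ⟨⋃ k, K k, ⟨K, hKc, rfl⟩, iUnion_subset hKG, fun x => ?_⟩
    refine le_antisymm (h1 ▸ measure_mono (subset_univ _)) ?_
    have htt : Tendsto (fun k : ℕ => ENNReal.ofReal (1 - 1 / ((k : ℝ) + 2))) atTop (𝓝 1) := by
      rw [show (1 : ENNReal) = ENNReal.ofReal 1 by simp]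
      refine ENNReal.tendsto_ofReal ?_
      have h0 : Tendsto (fun k : ℕ => 1 / ((k : ℝ) + 2)) atTop (𝓝 0) := by
        apply Tendsto.div_atTop tendsto_const_nhds
        exact tendsto_natCast_atTop_atTop.atTop_add tendsto_const_nhds
      simpa using tendsto_const_nhds.sub h0
    refine le_of_tendsto' htt fun k => ?_
    exact (hKm k x).le.trans (measure_mono fun y hy => mem_iUnion.2 ⟨k, hy⟩)
end

section
/- Let X ⊆ 2^ω × 2^ω be a set such that for each open set G ⊆ 2^ω × 2^ω containing X there is an x ∈ 2^ω with G|_x = 2^ω. Then there is a homeomorphic copy of X inside 2^ω which is not perfectly meager in the transitive sense (PMT). -/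
open Set Filter Topology MeasureTheory

namespace Aux6


/-- interleaving map -/
def epair (p : Cantor × Cantor) : Cantor := fun n => if n % 2 = 0 then p.1 (n / 2) else p.2 (n / 2)

def eunpair (z : Cantor) : Cantor × Cantor := (fun n => z (2 * n), fun n => z (2 * n + 1))

lemma epair_even (p : Cantor × Cantor) (n : ℕ) : epair p (2 * n) = p.1 n := by
  simp [epair, Nat.mul_div_cancel_left _ (by norm_num : 0 < 2), Nat.mul_mod_right]

lemma epair_odd (p : Cantor × Cantor) (n : ℕ) : epair p (2 * n + 1) = p.2 n := by
  have h1 : (2 * n + 1) % 2 = 1 := by omega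
  have h2 : (2 * n + 1) / 2 = n := by omega
  simp [epair, h1, h2]

noncomputable def eHomeo : (Cantor × Cantor) ≃ₜ Cantor where
  toFun := epair
  invFun := eunpair
  left_inv := by
    intro p
    refine Prod.ext ?_ ?_ <;> funext n
    · exact epair_even p n
    · exact epair_odd p n
  right_inv := by
    intro z
    funext n
    rcases Nat.even_or_odd n with ⟨m, hm⟩ | ⟨m, hm⟩
    · subst hm
      have : m + m = 2 * m := by ring
      rw [this, epair_even]; rfl
    · subst hm
      rw [epair_odd]; rfl
  continuous_toFun := by
    refine continuous_pi fun n => ?_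
    by_cases h : n % 2 = 0
    · simp only [epair, h, if_true]
      exact (continuous_apply _).comp continuous_fst
    · simp only [epair, h, if_false]
      exact (continuous_apply _).comp continuous_snd
  continuous_invFun := by
    refine Continuous.prodMk ?_ ?_ <;> exact continuous_pi fun n => continuous_apply _

lemma isOpen_cyl (z : Cantor) (m : ℕ) : IsOpen {y : Cantor | ∀ i < m, y i = z i} := by
  have : {y : Cantor | ∀ i < m, y i = z i} = ⋂ i ∈ Finset.range m, {y : Cantor | y i = z i} := by
    ext y; simp [Finset.mem_range]
  rw [this]
  refine isOpen_biInter_finset fun i _ => ?_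
  have : {y : Cantor | y i = z i} = (fun y : Cantor => y i) ⁻¹' {z i} := rfl
  rw [this]
  exact IsOpen.preimage (continuous_apply i) (isOpen_discrete ({z i} : Set Bool))

lemma exists_cyl {U : Set Cantor} (hU : IsOpen U) {z : Cantor} (hz : z ∈ U) :
    ∃ m, ∀ y : Cantor, (∀ i < m, y i = z i) → y ∈ U := by
  have hn : U ∈ 𝓝 z := hU.mem_nhds hz
  rw [nhds_pi, Filter.mem_pi] at hn
  obtain ⟨I, hI, t, ht, hsub⟩ := hn
  obtain ⟨m, hm⟩ : ∃ m, ∀ i ∈ I, i < m := by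
    rcases hI.bddAbove with ⟨b, hb⟩
    exact ⟨b + 1, fun i hi => Nat.lt_succ_of_le (hb hi)⟩
  refine ⟨m, fun y hy => hsub fun i hi => ?_⟩
  rw [hy i (hm i hi)]
  exact mem_of_mem_nhds (ht i)

lemma isNowhereDense_preimage {α β : Type*} [TopologicalSpace α] [TopologicalSpace β]
    (h : α ≃ₜ β) {s : Set β} (hs : IsNowhereDense s) : IsNowhereDense (h ⁻¹' s) := by
  unfold IsNowhereDense at *
  rw [← h.preimage_closure, ← h.preimage_interior, hs, Set.preimage_empty]

lemma isMeagre_preimage {α β : Type*} [TopologicalSpace α] [TopologicalSpace β]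
    (h : α ≃ₜ β) {s : Set β} (hs : IsMeagre s) : IsMeagre (h ⁻¹' s) := by
  rw [isMeagre_iff_countable_union_isNowhereDense] at *
  obtain ⟨S, hnwd, hcnt, hsub⟩ := hs
  refine ⟨(fun t => h ⁻¹' t) '' S, ?_, hcnt.image _, ?_⟩
  · rintro t ⟨u, hu, rfl⟩; exact isNowhereDense_preimage h (hnwd u hu)
  · intro x hx
    obtain ⟨u, hu, hxu⟩ := hsub hx
    exact ⟨h ⁻¹' u, ⟨u, hu, rfl⟩, hxu⟩

lemma interior_empty_of_isMeagre {s : Set Cantor} (hs : IsMeagre s) : interior s = ∅ := by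
  by_contra h
  obtain ⟨x, hx⟩ := Set.nonempty_iff_ne_empty.mpr h
  have hd : Dense sᶜ := dense_of_mem_residual hs
  obtain ⟨y, hy1, hy2⟩ := hd.exists_mem_open isOpen_interior ⟨x, hx⟩
  exact hy1 (interior_subset hy2)

lemma isClosed_cyl (z : Cantor) (m : ℕ) : IsClosed {y : Cantor | ∀ i < m, y i = z i} := by
  have : {y : Cantor | ∀ i < m, y i = z i} = ⋂ i ∈ Finset.range m, (fun y : Cantor => y i) ⁻¹' {z i} := by
    ext y; simp [Finset.mem_range]
  rw [this]
  exact isClosed_biInter fun i _ => IsClosed.preimage (continuous_apply i) (isClosed_discrete _)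

lemma step_ex (K : Set (Cantor × Cantor)) (hK : IsCompact K)
    (hsec : ∀ x : Cantor, interior {y : Cantor | (x, y) ∈ K} = ∅)
    (L N n : ℕ) (σ : Cantor → Cantor)
    (hσ : ∀ x x' : Cantor, (∀ i < N, x i = x' i) → σ x = σ x') :
    ∃ (L' N' : ℕ) (σ' : Cantor → Cantor),
      L ≤ L' ∧ n ≤ L' ∧
      (∀ x x' : Cantor, (∀ i < N', x i = x' i) → σ' x = σ' x') ∧
      (∀ x : Cantor, ∀ i < L, σ' x i = σ x i) ∧
      (∀ x y : Cantor, (∀ i < L', y i = σ' x i) → (x, y) ∉ K) := by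
  classical
  have hKc : IsClosed K := hK.isClosed
  have key : ∀ x : Cantor, ∃ (wlm : Cantor × ℕ × ℕ), L ≤ wlm.2.1 ∧ N ≤ wlm.2.2 ∧
      (∀ i < L, wlm.1 i = σ x i) ∧
      (∀ x' y : Cantor, (∀ i < wlm.2.2, x' i = x i) → (∀ i < wlm.2.1, y i = wlm.1 i) →
        (x', y) ∉ K) := by
    intro x
    set S := {y : Cantor | (x, y) ∈ K} with hSdef
    have hScl : IsClosed S := by
      have : S = (fun y : Cantor => (x, y)) ⁻¹' K := rfl
      rw [this]; exact hKc.preimage (Continuous.prodMk_right x)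
    have hnsub : ¬ ({y : Cantor | ∀ i < L, y i = σ x i} ⊆ S) := by
      intro hsub
      have h1 : {y : Cantor | ∀ i < L, y i = σ x i} ⊆ interior S :=
        interior_maximal hsub (isOpen_cyl (σ x) L)
      have h2 : σ x ∈ interior S := h1 (fun i _ => rfl)
      rw [hsec x] at h2
      exact h2
    obtain ⟨w, hwcyl, hwS⟩ := not_subset.mp hnsub
    obtain ⟨l0, hl0⟩ := exists_cyl hScl.isOpen_compl hwS
    set l := max l0 L with hldef
    set T := Prod.fst '' (K ∩ {p : Cantor × Cantor | ∀ i < l, p.2 i = w i}) with hTdef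
    have hTcl : IsClosed T := by
      refine (IsCompact.image ?_ continuous_fst).isClosed
      refine hK.inter_right ?_
      have : {p : Cantor × Cantor | ∀ i < l, p.2 i = w i}
          = Prod.snd ⁻¹' {y : Cantor | ∀ i < l, y i = w i} := rfl
      rw [this]; exact (isClosed_cyl w l).preimage continuous_snd
    have hxT : x ∉ T := by
      rintro ⟨p, ⟨hpK, hpc⟩, hpx⟩
      have hyS : p.2 ∈ S := by rw [hSdef]; simpa [← hpx] using hpK
      have : p.2 ∈ Sᶜ := hl0 p.2 (fun i hi => hpc i (lt_of_lt_of_le hi (le_max_left _ _)))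
      exact this hyS
    obtain ⟨m0, hm0⟩ := exists_cyl hTcl.isOpen_compl hxT
    refine ⟨⟨w, l, max m0 N⟩, le_max_right _ _, le_max_right _ _, hwcyl, ?_⟩
    intro x' y hx' hy hK'
    have hx'T : x' ∈ Tᶜ := hm0 x' (fun i hi => hx' i (lt_of_lt_of_le hi (le_max_left _ _)))
    exact hx'T ⟨(x', y), ⟨hK', hy⟩, rfl⟩
  choose wlm hL hN hw hav using key
  set w : Cantor → Cantor := fun x => (wlm x).1 with hwdef
  set lf : Cantor → ℕ := fun x => (wlm x).2.1 with hlfdef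
  set mf : Cantor → ℕ := fun x => (wlm x).2.2 with hmfdef
  have hcover : (univ : Set Cantor) ⊆ ⋃ c : Cantor, {x : Cantor | ∀ i < mf c, x i = c i} := by
    intro x _
    exact mem_iUnion.mpr ⟨x, fun i _ => rfl⟩
  obtain ⟨t, ht⟩ := isCompact_univ.elim_finite_subcover
    (fun c : Cantor => {x : Cantor | ∀ i < mf c, x i = c i}) (fun c => isOpen_cyl c (mf c)) hcover
  set zdef : Cantor := fun _ => false
  set ℓ : List Cantor := t.toList with hℓdef
  set crit : Cantor → ℕ → Prop :=
    fun x j => j < ℓ.length ∧ ∀ i < mf (ℓ.getD j zdef), x i = (ℓ.getD j zdef) i with hcrit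
  have hex : ∀ x : Cantor, ∃ j, crit x j := by
    intro x
    have := ht (mem_univ x)
    rw [mem_iUnion₂] at this
    obtain ⟨c, hct, hxc⟩ := this
    have hcl : c ∈ ℓ := by rw [hℓdef]; exact Finset.mem_toList.mpr hct
    obtain ⟨j, hj, hjc⟩ := List.mem_iff_getElem.mp hcl
    refine ⟨j, hj, ?_⟩
    have : ℓ.getD j zdef = c := by rw [List.getD_eq_getElem ℓ zdef hj, hjc]
    rw [this]; exact hxc
  set idx : Cantor → ℕ := fun x => Nat.find (hex x) with hidx
  set cc : Cantor → Cantor := fun x => ℓ.getD (idx x) zdef with hcc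
  have hccmem : ∀ x, cc x ∈ t := by
    intro x
    have hj : idx x < ℓ.length := (Nat.find_spec (hex x)).1
    rw [hcc]
    simp only []
    rw [List.getD_eq_getElem ℓ zdef hj]
    exact Finset.mem_toList.mp (List.getElem_mem hj)
  have hxcc : ∀ x, ∀ i < mf (cc x), x i = cc x i := fun x => (Nat.find_spec (hex x)).2
  set N' : ℕ := t.sup mf with hN'
  set L' : ℕ := max (max (t.sup lf) L) n with hL'
  refine ⟨L', N', fun x => fun i => if i < lf (cc x) then w (cc x) i else false,
    le_max_of_le_left (le_max_right _ _), le_max_right _ _, ?_, ?_, ?_⟩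
  · -- dependence on first N' coordinates
    intro x x' hxx'
    have hcrit_iff : ∀ j, crit x j ↔ crit x' j := by
      intro j
      rw [hcrit]
      simp only []
      constructor <;> rintro ⟨hj, hc⟩ <;> refine ⟨hj, fun i hi => ?_⟩
      · have hmem : ℓ.getD j zdef ∈ t := by
          rw [List.getD_eq_getElem ℓ zdef hj]; exact Finset.mem_toList.mp (List.getElem_mem hj)
        have : mf (ℓ.getD j zdef) ≤ N' := Finset.le_sup hmem
        rw [← hxx' i (lt_of_lt_of_le hi this)]; exact hc i hi
      · have hmem : ℓ.getD j zdef ∈ t := by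
          rw [List.getD_eq_getElem ℓ zdef hj]; exact Finset.mem_toList.mp (List.getElem_mem hj)
        have : mf (ℓ.getD j zdef) ≤ N' := Finset.le_sup hmem
        rw [hxx' i (lt_of_lt_of_le hi this)]; exact hc i hi
    have hidxeq : idx x = idx x' := by
      apply le_antisymm
      · exact Nat.find_min' (hex x) ((hcrit_iff _).mpr (Nat.find_spec (hex x')))
      · exact Nat.find_min' (hex x') ((hcrit_iff _).mp (Nat.find_spec (hex x)))
    have hceq : cc x = cc x' := by rw [hcc]; simp only [hidxeq]
    funext i
    simp only [hceq]
  · -- extends σ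
    intro x i hiL
    have hσeq : σ x = σ (cc x) := hσ x (cc x) (fun i hi => hxcc x i (lt_of_lt_of_le hi (hN (cc x))))
    have hil : i < lf (cc x) := lt_of_lt_of_le hiL (hL (cc x))
    show (if i < lf (cc x) then w (cc x) i else false) = σ x i
    rw [if_pos hil, hσeq]
    exact hw (cc x) i hiL
  · -- avoidance
    intro x y hy
    have hlcc : lf (cc x) ≤ L' :=
      le_trans (Finset.le_sup (hccmem x)) (le_max_of_le_left (le_max_left _ _))
    refine hav (cc x) x y (fun i hi => hxcc x i hi) ?_
    intro i hi
    have h2 := hy i (lt_of_lt_of_le hi hlcc)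
    rw [h2]
    show (if i < lf (cc x) then w (cc x) i else false) = w (cc x) i
    exact if_pos hi

lemma epair_cont : Continuous epair := eHomeo.continuous_toFun

lemma exists_chain {α : Type*} (P : ℕ → α → Prop) (R : α → α → Prop) (a0 : α) (h0 : P 0 a0)
    (hstep : ∀ n a, P n a → ∃ b, R a b ∧ P (n + 1) b) :
    ∃ f : ℕ → α, (∀ n, P n (f n)) ∧ ∀ n, R (f n) (f (n + 1)) := by
  choose! g hg1 hg2 using hstep
  refine ⟨fun n => Nat.rec a0 (fun n a => g n a) n, ?_, ?_⟩
  · intro n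
    induction n with
    | zero => exact h0
    | succ n ih => exact hg2 n _ ih
  · intro n
    have hP : ∀ k, P k (Nat.rec a0 (fun n a => g n a) k : α) := by
      intro k
      induction k with
      | zero => exact h0
      | succ k ih => exact hg2 k _ ih
    exact hg1 n _ (hP n)

def CDatum := ℕ × ℕ × (Cantor → Cantor)

def Inv (K : ℕ → Set (Cantor × Cantor)) (n : ℕ) (d : CDatum) : Prop :=
  (∀ x x' : Cantor, (∀ i < d.2.1, x i = x' i) → d.2.2 x = d.2.2 x') ∧ n ≤ d.1 ∧
    (∀ m < n, ∀ x y : Cantor, (∀ i < d.1, y i = d.2.2 x i) → (x, y) ∉ K m)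

def CRel (d d' : CDatum) : Prop :=
  d.1 ≤ d'.1 ∧ ∀ x : Cantor, ∀ i < d.1, d'.2.2 x i = d.2.2 x i

lemma main_combo (K : ℕ → Set (Cantor × Cantor)) (hc : ∀ n, IsCompact (K n))
    (hsec : ∀ n x, interior {y : Cantor | (x, y) ∈ K n} = ∅) :
    ∃ G : Set (Cantor × Cantor), IsOpen G ∧ (∀ n, K n ⊆ G) ∧
      ∀ x : Cantor, ∃ y : Cantor, (x, y) ∉ G := by
  have h0 : Inv K 0 (0, 0, fun _ _ => false) :=
    ⟨fun _ _ _ => rfl, le_refl 0, fun m hm => absurd hm (Nat.not_lt_zero m)⟩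
  have hstep : ∀ n d, Inv K n d → ∃ d', CRel d d' ∧ Inv K (n + 1) d' := by
    intro n d hd
    obtain ⟨L', N', σ', h1, h2, h3, h4, h5⟩ :=
      step_ex (K n) (hc n) (hsec n) d.1 d.2.1 (n + 1) d.2.2 hd.1
    refine ⟨(L', N', σ'), ⟨h1, h4⟩, h3, h2, ?_⟩
    intro m hm x y hy
    rcases Nat.lt_succ_iff_lt_or_eq.mp hm with hm' | rfl
    · apply hd.2.2 m hm' x y
      intro i hi
      rw [← h4 x i hi]
      exact hy i (lt_of_lt_of_le hi h1)
    · exact h5 x y hy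
  obtain ⟨f, hfP, hfR⟩ := exists_chain (Inv K) CRel _ h0 hstep
  have hLmono : Monotone (fun n => (f n).1) := monotone_nat_of_le_succ fun n => (hfR n).1
  have hcoh : ∀ n k, n ≤ k → ∀ x : Cantor, ∀ i < (f n).1, (f k).2.2 x i = (f n).2.2 x i := by
    intro n k hnk
    induction k, hnk using Nat.le_induction with
    | base => intro x i _; rfl
    | succ k hnk ih =>
      intro x i hi
      rw [(hfR k).2 x i (lt_of_lt_of_le hi (hLmono hnk))]
      exact ih x i hi
  refine ⟨⋃ n, ⋃ i, {p : Cantor × Cantor | i < (f n).1 ∧ p.2 i ≠ (f n).2.2 p.1 i}, ?_, ?_, ?_⟩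
  · refine isOpen_iUnion fun n => isOpen_iUnion fun i => ?_
    rw [isOpen_iff_forall_mem_open]
    rintro ⟨x, y⟩ ⟨hi, hne⟩
    refine ⟨{p : Cantor × Cantor | (∀ j < (f n).2.1, p.1 j = x j) ∧ p.2 i = y i}, ?_, ?_, ?_⟩
    · rintro ⟨x', y'⟩ ⟨hx', hy'⟩
      refine ⟨hi, ?_⟩
      have hσ : (f n).2.2 x' = (f n).2.2 x := (hfP n).1 x' x hx'
      have hy'' : y' i = y i := hy'
      show y' i ≠ (f n).2.2 x' i
      rw [hσ, hy'']
      exact hne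
    · have : {p : Cantor × Cantor | (∀ j < (f n).2.1, p.1 j = x j) ∧ p.2 i = y i}
          = (Prod.fst ⁻¹' {z : Cantor | ∀ j < (f n).2.1, z j = x j}) ∩
            ((fun p : Cantor × Cantor => p.2 i) ⁻¹' {y i}) := rfl
      rw [this]
      exact IsOpen.inter ((isOpen_cyl x ((f n).2.1)).preimage continuous_fst)
        (IsOpen.preimage ((continuous_apply i).comp continuous_snd)
          (isOpen_discrete ({y i} : Set Bool)))
    · exact ⟨fun j _ => rfl, rfl⟩
  · intro n p hp
    by_contra hnG
    simp only [mem_iUnion, not_exists, mem_setOf_eq] at hnG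
    have hall : ∀ i < (f (n + 1)).1, p.2 i = (f (n + 1)).2.2 p.1 i := by
      intro i hi
      by_contra hne
      exact hnG (n + 1) i ⟨hi, hne⟩
    have := (hfP (n + 1)).2.2 n (Nat.lt_succ_self n) p.1 p.2 hall
    rw [Prod.mk.eta] at this
    exact this hp
  · intro x
    refine ⟨fun i => (f (i + 1)).2.2 x i, ?_⟩
    intro hmem
    simp only [mem_iUnion, mem_setOf_eq] at hmem
    obtain ⟨n, i, hi, hne⟩ := hmem
    apply hne
    rcases le_total (i + 1) n with h | h
    · exact (hcoh (i + 1) n h x i (lt_of_lt_of_le (Nat.lt_succ_self i) (hfP (i + 1)).2.1)).symm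
    · exact hcoh n (i + 1) h x i hi

def Pset : Set Cantor := {z : Cantor | ∀ n, z (2 * n) = false}

lemma perfect_Pset : Perfect Pset := by
  constructor
  · have : Pset = ⋂ n, (fun z : Cantor => z (2 * n)) ⁻¹' {false} := by
      ext z; simp [Pset]
    rw [this]
    exact isClosed_iInter fun n => (isClosed_discrete _).preimage (continuous_apply _)
  · intro z hz
    rw [accPt_iff_nhds]
    intro U hU
    obtain ⟨V, hVU, hVopen, hzV⟩ := mem_nhds_iff.mp hU
    obtain ⟨m, hm⟩ := exists_cyl hVopen hzV
    refine ⟨fun n => if n = 2 * m + 1 then !(z n) else z n, ⟨?_, ?_⟩, ?_⟩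
    · exact hVU (hm _ (fun i hi => if_neg (by omega)))
    · intro n
      show (if 2 * n = 2 * m + 1 then !z (2 * n) else z (2 * n)) = false
      rw [if_neg (by omega : ¬ (2 * n = 2 * m + 1))]
      exact hz n
    · intro heq
      have h2 := congrFun heq (2 * m + 1)
      rw [if_pos rfl] at h2
      exact absurd h2 (Bool.not_ne_self _)

lemma Pset_nonempty : Pset.Nonempty := ⟨fun _ => false, fun _ => rfl⟩

def tA (a : Cantor) : Set Cantor := {z : Cantor | ∀ n, z (2 * n) = a n}

lemma tAdd_Pset (a : Cantor) : tAdd (epair (a, fun _ => false)) Pset = tA a := by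
  set t := epair (a, fun _ => false) with hT
  have hte : ∀ n, t (2 * n) = a n := fun n => epair_even _ n
  have hto : ∀ n, t (2 * n + 1) = false := fun n => epair_odd _ n
  ext z
  constructor
  · rintro ⟨p, hp, rfl⟩ n
    show xor (t (2 * n)) (p (2 * n)) = a n
    rw [hte n, hp n, Bool.xor_false]
  · intro hzn
    refine ⟨cadd t z, ?_, ?_⟩
    · intro n
      show xor (t (2 * n)) (z (2 * n)) = false
      rw [hte n, hzn n, Bool.xor_self]
    · funext n
      show xor (t n) (xor (t n) (z n)) = z n
      cases t n <;> cases z n <;> rfl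

noncomputable def oddHomeo (a : Cantor) : Cantor ≃ₜ ↥(tA a) where
  toFun y := ⟨epair (a, y), fun n => epair_even (a, y) n⟩
  invFun z := fun n => (z : Cantor) (2 * n + 1)
  left_inv y := funext fun n => epair_odd (a, y) n
  right_inv z := by
    apply Subtype.ext
    funext n
    rcases Nat.even_or_odd n with ⟨m, hm⟩ | ⟨m, hm⟩
    · have hm2 : n = 2 * m := by omega
      subst hm2
      show epair (a, fun k => (z : Cantor) (2 * k + 1)) (2 * m) = (z : Cantor) (2 * m)
      rw [epair_even]
      exact (z.2 m).symm
    · subst hm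
      show epair (a, fun k => (z : Cantor) (2 * k + 1)) (2 * m + 1) = (z : Cantor) (2 * m + 1)
      rw [epair_odd]
  continuous_toFun := by
    apply Continuous.subtype_mk
    exact epair_cont.comp (continuous_const.prodMk continuous_id)
  continuous_invFun := by
    show Continuous fun z : ↥(tA a) => (fun n => (z : Cantor) (2 * n + 1))
    exact continuous_pi fun n => (continuous_apply _).comp continuous_subtype_val

end Aux6

theorem stmt6 (X : Set (Cantor × Cantor))
    (hX : ∀ G : Set (Cantor × Cantor), IsOpen G → X ⊆ G →
      ∃ x : Cantor, sect G x = univ) :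
    ∃ Z : Set Cantor, Nonempty (X ≃ₜ Z) ∧ ¬ PMT Z := by
  classical
  refine ⟨Aux6.eHomeo '' X, ⟨Aux6.eHomeo.image X⟩, ?_⟩
  intro hPMT
  obtain ⟨F, hFσ, hZF, hFm⟩ := hPMT Aux6.Pset Aux6.perfect_Pset Aux6.Pset_nonempty
  obtain ⟨Kf, hKc, hKU⟩ := hFσ
  have hsecF : ∀ a : Cantor, IsMeagre {y : Cantor | Aux6.epair (a, y) ∈ F} := by
    intro a
    have h1 := hFm (Aux6.epair (a, fun _ => false))
    rw [Aux6.tAdd_Pset a] at h1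
    have h2 := Aux6.isMeagre_preimage (Aux6.oddHomeo a) h1
    have h3 : (Aux6.oddHomeo a) ⁻¹' (Subtype.val ⁻¹' F)
        = {y : Cantor | Aux6.epair (a, y) ∈ F} := rfl
    rwa [h3] at h2
  have hcoe : ⇑Aux6.eHomeo = Aux6.epair := rfl
  have hK'c : ∀ n, IsCompact (Aux6.epair ⁻¹' (Kf n)) := by
    intro n
    rw [← hcoe]
    exact Aux6.eHomeo.isCompact_preimage.mpr (hKc n)
  have hK'sec : ∀ n x, interior {y : Cantor | (x, y) ∈ Aux6.epair ⁻¹' (Kf n)} = ∅ := by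
    intro n x
    apply Aux6.interior_empty_of_isMeagre
    apply (hsecF x).mono
    intro y hy
    show Aux6.epair (x, y) ∈ F
    rw [← hKU]
    exact mem_iUnion.mpr ⟨n, hy⟩
  obtain ⟨G, hGopen, hGsub, hGsec⟩ :=
    Aux6.main_combo (fun n => Aux6.epair ⁻¹' (Kf n)) hK'c hK'sec
  have hXG : X ⊆ G := by
    intro p hp
    have hmem : Aux6.epair p ∈ F := hZF ⟨p, hp, rfl⟩
    rw [← hKU] at hmem
    obtain ⟨n, hn⟩ := mem_iUnion.mp hmem
    exact hGsub n hn
  obtain ⟨x0, hx0⟩ := hX G hGopen hXG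
  obtain ⟨y0, hy0⟩ := hGsec x0
  apply hy0
  show y0 ∈ sect G x0
  rw [hx0]
  trivial
end

section
/- A set X ⊆ 2^ω is PMT if and only if for any sequence (P_n)_{n∈ω} of perfect subsets of 2^ω, there are compact sets F_0, F_1, … ⊆ 2^ω such that X ⊆ ⋃_n F_n and for all natural numbers n, m and every t ∈ 2^ω, the set t ⊕ P_n is not contained in F_m. -/
open Set Filter Topology MeasureTheory

namespace StmtAux

lemma xor_eq_iff (a b c : Bool) : xor a b = c ↔ b = xor a c := by
  cases a <;> cases b <;> cases c <;> decide

lemma xor_xor_cancel (a b : Bool) : xor (xor a b) a = b := by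
  cases a <;> cases b <;> rfl

lemma xor_xor_xor (a b c : Bool) : xor (xor a b) (xor b c) = xor a c := by
  cases a <;> cases b <;> cases c <;> rfl

lemma xor_self_xor (a b : Bool) : xor a (xor a b) = b := by
  cases a <;> cases b <;> rfl

lemma cadd_cadd (t x : Cantor) : cadd t (cadd t x) = x := by
  funext n; simp [cadd]

lemma continuous_cadd (t : Cantor) : Continuous (cadd t) := by
  apply continuous_pi
  intro n
  exact Continuous.comp (continuous_of_discreteTopology) (continuous_apply n)

lemma tAdd_eq_preimage (t : Cantor) (P : Set Cantor) : tAdd t P = cadd t ⁻¹' P := by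
  ext x
  constructor
  · rintro ⟨p, hp, rfl⟩; simpa [cadd_cadd] using hp
  · intro hx; exact ⟨cadd t x, hx, cadd_cadd t x⟩

lemma mem_tAdd_iff {t x : Cantor} {P : Set Cantor} : x ∈ tAdd t P ↔ cadd t x ∈ P := by
  rw [tAdd_eq_preimage]; rfl

lemma tAdd_mono {t : Cantor} {P Q : Set Cantor} (h : P ⊆ Q) : tAdd t P ⊆ tAdd t Q :=
  Set.image_mono h

lemma isCompact_tAdd {P : Set Cantor} (h : IsCompact P) (t : Cantor) :
    IsCompact (tAdd t P) :=
  h.image (continuous_cadd t)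

/-- The basic clopen cylinder determined by the first `n` coordinates of `s`. -/
def cyl (n : ℕ) (s : Cantor) : Set Cantor := {x | ∀ i < n, x i = s i}

lemma self_mem_cyl (n : ℕ) (s : Cantor) : s ∈ cyl n s := fun _ _ => rfl

lemma cyl_congr {k : ℕ} {s s' : Cantor} (h : ∀ i < k, s i = s' i) :
    cyl k s = cyl k s' := by
  ext x
  exact forall₂_congr fun i hi => by rw [h i hi]

lemma cyl_eq_iInter (n : ℕ) (s : Cantor) :
    cyl n s = ⋂ i : Fin n, {x : Cantor | x i.1 = s i.1} := by
  ext x; simp only [cyl, mem_setOf_eq, mem_iInter]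
  constructor
  · intro h i; exact h i.1 i.2
  · intro h i hi; exact h ⟨i, hi⟩

lemma isOpen_cyl (n : ℕ) (s : Cantor) : IsOpen (cyl n s) := by
  rw [cyl_eq_iInter]
  apply isOpen_iInter_of_finite
  intro i
  show IsOpen ((fun x : Cantor => x i.1) ⁻¹' {s i.1})
  exact IsOpen.preimage (continuous_apply i.1) (isOpen_discrete {s i.1})

lemma isClosed_cyl (n : ℕ) (s : Cantor) : IsClosed (cyl n s) := by
  rw [cyl_eq_iInter]
  apply isClosed_iInter
  intro i
  show IsClosed ((fun x : Cantor => x i.1) ⁻¹' {s i.1})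
  exact IsClosed.preimage (continuous_apply i.1) (isClosed_discrete {s i.1})

lemma exists_cyl_subset {W : Set Cantor} (hW : IsOpen W) {x : Cantor} (hx : x ∈ W) :
    ∃ n, cyl n x ⊆ W := by
  rw [isOpen_pi_iff] at hW
  obtain ⟨I, u, hu, hsub⟩ := hW x hx
  refine ⟨(I.sup id) + 1, fun y hy => hsub ?_⟩
  intro a ha
  have : y a = x a := hy a (Nat.lt_succ_of_le (Finset.le_sup (f := id) ha))
  rw [this]
  exact (hu a ha).2

lemma tAdd_cyl (t : Cantor) (n : ℕ) (s : Cantor) :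
    tAdd t (cyl n s) = cyl n (cadd t s) := by
  rw [tAdd_eq_preimage]
  ext x
  simp only [mem_preimage, cyl, mem_setOf_eq, cadd]
  exact forall₂_congr fun i _ => xor_eq_iff _ _ _

lemma perfect_inter_cyl {P : Set Cantor} (hP : Perfect P) (n : ℕ) (s : Cantor) :
    Perfect (P ∩ cyl n s) := by
  constructor
  · exact hP.1.inter (isClosed_cyl n s)
  · intro x hx
    rw [accPt_iff_nhds]
    intro U hU
    have hU' : U ∩ cyl n s ∈ 𝓝 x :=
      inter_mem hU ((isOpen_cyl n s).mem_nhds hx.2)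
    obtain ⟨y, hy, hyx⟩ := accPt_iff_nhds.mp (hP.2 x hx.1) _ hU'
    exact ⟨y, ⟨hy.1.1, hy.2, hy.1.2⟩, hyx⟩

lemma perfect_tAdd {P : Set Cantor} (hP : Perfect P) (t : Cantor) :
    Perfect (tAdd t P) := by
  rw [tAdd_eq_preimage]
  constructor
  · exact hP.1.preimage (continuous_cadd t)
  · intro x hx
    rw [accPt_iff_nhds]
    intro U hU
    have hcont : ContinuousAt (cadd t) (cadd t x) := (continuous_cadd t).continuousAt
    have hU' : cadd t ⁻¹' U ∈ 𝓝 (cadd t x) := by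
      apply hcont
      rwa [cadd_cadd]
    obtain ⟨y, hy, hyx⟩ := accPt_iff_nhds.mp (hP.2 _ hx) _ hU'
    refine ⟨cadd t y, ⟨hy.1, by simpa [cadd_cadd] using hy.2⟩, ?_⟩
    intro h
    apply hyx
    rw [← h, cadd_cadd]

lemma not_isMeagre_of_open_subset {Q : Set Cantor} (hQ : IsCompact Q)
    {M W : Set ↥Q} (hW : IsOpen W) (hWne : W.Nonempty) (hWM : W ⊆ M) :
    ¬ IsMeagre M := by
  haveI : CompactSpace ↥Q := isCompact_iff_compactSpace.mp hQ
  haveI : LocallyCompactSpace ↥Q := inferInstance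
  intro hM
  have hd : Dense Mᶜ := dense_of_mem_residual hM
  obtain ⟨z, hz1, hz2⟩ := hd.exists_mem_open hW hWne
  exact hz1 (hWM hz2)

end StmtAux

open StmtAux in
theorem stmt7_forward (X : Set Cantor) (hX : PMT X) :
    ∀ P : ℕ → Set Cantor, (∀ n, Perfect (P n) ∧ (P n).Nonempty) →
      ∃ F : ℕ → Set Cantor, (∀ m, IsCompact (F m)) ∧ X ⊆ ⋃ m, F m ∧
        ∀ n m : ℕ, ∀ t : Cantor, ¬ tAdd t (P n) ⊆ F m := by
  intro P hP
  choose p hp using fun n => (hP n).2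
  set v : ℕ → Cantor := fun n i => decide (i = n) with hv
  set c : ℕ → Cantor := fun n i => if i ≤ n then xor (p n i) (v n i) else false with hc
  set R : ℕ → Set Cantor := fun n => tAdd (c n) (P n ∩ cyl (n + 1) (p n)) with hR
  set z0 : Cantor := fun _ => false with hz0
  set Q : Set Cantor := {z0} ∪ ⋃ n, R n with hQdef
  have hvlt : ∀ {i n : ℕ}, i < n → v n i = false := by
    intro i n h; simp only [hv, decide_eq_false_iff_not]; omega
  have hvn : ∀ n : ℕ, v n n = true := by intro n; simp [hv]
  have hRsub : ∀ n, R n ⊆ cyl (n + 1) (v n) := by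
    rintro n x ⟨y, hy, rfl⟩
    intro i hi
    have hi' : i ≤ n := Nat.lt_succ_iff.mp hi
    have hyi : y i = p n i := hy.2 i hi
    show xor (c n i) (y i) = v n i
    rw [hyi, hc]
    simp only [hi', if_true]
    exact xor_xor_cancel _ _
  have hRperf : ∀ n, Perfect (R n) := fun n =>
    perfect_tAdd (perfect_inter_cyl (hP n).1 _ _) _
  have hRmem : ∀ n, cadd (c n) (p n) ∈ R n := fun n =>
    ⟨p n, ⟨hp n, self_mem_cyl _ _⟩, rfl⟩
  have hRclosed : ∀ n, IsClosed (R n) := fun n => (hRperf n).1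
  have hcylval : ∀ {n : ℕ} {y : Cantor}, y ∈ cyl (n + 1) (v n) → y n = true := by
    intro n y hy
    have := hy n (Nat.lt_succ_self n)
    rwa [hvn] at this
  have hcyl_disj : ∀ {m n : ℕ} {y : Cantor}, m < n →
      y ∈ cyl (n + 1) (v n) → y ∈ cyl (m + 1) (v m) → False := by
    intro m n y hmn hyn hym
    have h1 : y m = true := hcylval hym
    have h2 : y m = false := by
      have := hyn m (by omega)
      rwa [hvlt hmn] at this
    simp [h1] at h2
  have hz0not : ∀ n, z0 ∉ cyl (n + 1) (v n) := by
    intro n hn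
    have := hcylval hn
    simp [hz0] at this
  have hQR : ∀ n, Q ∩ cyl (n + 1) (v n) = R n := by
    intro n
    apply Set.Subset.antisymm
    · rintro x ⟨hxQ, hxc⟩
      rcases hxQ with hx0 | hxR
      · rw [mem_singleton_iff] at hx0
        exact absurd (hx0 ▸ hxc) (hz0not n)
      · obtain ⟨m, hm⟩ := mem_iUnion.mp hxR
        rcases Nat.lt_trichotomy m n with h | h | h
        · exact absurd hxc fun hc' => hcyl_disj h hc' (hRsub m hm)
        · rwa [← h]
        · exact absurd (hRsub m hm) fun hc' => hcyl_disj h hc' hxc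
    · intro x hx
      exact ⟨Or.inr (mem_iUnion.mpr ⟨n, hx⟩), hRsub n hx⟩
  have hQclosed : IsClosed Q := by
    rw [← isOpen_compl_iff, isOpen_iff_mem_nhds]
    intro x hx
    have hxz : x ≠ z0 := fun h => hx (h ▸ Or.inl rfl)
    have hk : ∃ k, x k = true := by
      by_contra hcon
      push_neg at hcon
      exact hxz (funext fun k => by simpa [hz0] using hcon k)
    obtain ⟨k, hk⟩ := hk
    have hnb : (cyl (k + 1) x ∩ ⋂ m ∈ Finset.range (k + 1), (R m)ᶜ) ∈ 𝓝 x := by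
      apply IsOpen.mem_nhds
      · exact (isOpen_cyl _ _).inter
          (isOpen_biInter_finset fun m _ => (hRclosed m).isOpen_compl)
      · refine ⟨self_mem_cyl _ _, ?_⟩
        simp only [mem_iInter, mem_compl_iff]
        intro m _
        exact fun hm => hx (Or.inr (mem_iUnion.mpr ⟨m, hm⟩))
    refine Filter.mem_of_superset hnb ?_
    rintro y ⟨hyc, hyR⟩
    simp only [mem_iInter, mem_compl_iff] at hyR
    intro hyQ
    rcases hyQ with h0 | hR'
    · rw [mem_singleton_iff] at h0
      have : y k = true := (hyc k (Nat.lt_succ_self k)).trans hk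
      rw [h0] at this
      simp [hz0] at this
    · obtain ⟨m, hm⟩ := mem_iUnion.mp hR'
      by_cases hmk : m ≤ k
      · exact hyR m (Finset.mem_range.mpr (by omega)) hm
      · have h1 : y k = false := by
          have := hRsub m hm k (by omega)
          rwa [hvlt (by omega : k < m)] at this
        have h2 : y k = true := (hyc k (Nat.lt_succ_self k)).trans hk
        simp [h2] at h1
  have hQperf : Perfect Q := by
    refine ⟨hQclosed, ?_⟩
    intro x hx
    rcases hx with h0 | hR'
    · rw [mem_singleton_iff] at h0
      subst h0
      rw [accPt_iff_nhds]
      intro U hU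
      obtain ⟨O, hOU, hO, hxO⟩ := mem_nhds_iff.mp hU
      obtain ⟨n, hn⟩ := exists_cyl_subset hO hxO
      refine ⟨cadd (c n) (p n), ⟨hOU (hn ?_), Or.inr (mem_iUnion.mpr ⟨n, hRmem n⟩)⟩, ?_⟩
      · intro i hi
        have := hRsub n (hRmem n) i (by omega)
        rw [hvlt hi] at this
        simpa [hz0] using this
      · intro h
        have := hcylval (hRsub n (hRmem n))
        rw [h] at this
        simp [hz0] at this
    · obtain ⟨n, hn⟩ := mem_iUnion.mp hR'
      exact ((hRperf n).2 x hn).mono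
        (principal_mono.mpr fun y hy => Or.inr (mem_iUnion.mpr ⟨n, hy⟩))
  have hQcomp : IsCompact Q := hQclosed.isCompact
  obtain ⟨F, hFsc, hXF, hmeag⟩ := hX Q hQperf ⟨z0, Or.inl rfl⟩
  obtain ⟨K, hK, hKF⟩ := hFsc
  refine ⟨K, hK, by rw [hKF]; exact hXF, ?_⟩
  intro n m t hsub
  set t' : Cantor := cadd t (c n) with ht'
  have key : tAdd t' (R n) ⊆ K m := by
    rintro x ⟨r, hr, rfl⟩
    obtain ⟨y, hy, rfl⟩ := hr
    have hxy : cadd t' (cadd (c n) y) = cadd t y := by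
      funext i
      exact xor_xor_xor (t i) (c n i) (y i)
    rw [hxy]
    exact hsub ⟨y, hy.1, rfl⟩
  have hKmF : K m ⊆ F := hKF ▸ subset_iUnion K m
  refine not_isMeagre_of_open_subset (Q := tAdd t' Q) (isCompact_tAdd hQcomp t')
    (M := (Subtype.val ⁻¹' F : Set (tAdd t' Q)))
    (W := (Subtype.val ⁻¹' (cyl (n + 1) (cadd t' (v n))) : Set (tAdd t' Q)))
    ?_ ?_ ?_ (hmeag t')
  · exact (isOpen_cyl _ _).preimage continuous_subtype_val
  · have hmem : cadd t' (cadd (c n) (p n)) ∈ tAdd t' Q :=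
      ⟨cadd (c n) (p n), Or.inr (mem_iUnion.mpr ⟨n, hRmem n⟩), rfl⟩
    refine ⟨⟨_, hmem⟩, ?_⟩
    show cadd t' (cadd (c n) (p n)) ∈ cyl (n + 1) (cadd t' (v n))
    rw [← tAdd_cyl]
    exact tAdd_mono (hRsub n) ⟨cadd (c n) (p n), hRmem n, rfl⟩
  · rintro ⟨x, hxQ⟩ hxW
    have hx1 : x ∈ tAdd t' (cyl (n + 1) (v n)) := by rw [tAdd_cyl]; exact hxW
    have hx2 : cadd t' x ∈ Q := mem_tAdd_iff.mp hxQ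
    have hx3 : cadd t' x ∈ cyl (n + 1) (v n) := mem_tAdd_iff.mp hx1
    have hx4 : cadd t' x ∈ R n := by rw [← hQR n]; exact ⟨hx2, hx3⟩
    have hx5 : x ∈ tAdd t' (R n) := ⟨cadd t' x, hx4, cadd_cadd t' x⟩
    exact mem_preimage.mpr (hKmF (key hx5))

open StmtAux in
theorem stmt7_backward (X : Set Cantor)
    (h : ∀ P : ℕ → Set Cantor, (∀ n, Perfect (P n) ∧ (P n).Nonempty) →
      ∃ F : ℕ → Set Cantor, (∀ m, IsCompact (F m)) ∧ X ⊆ ⋃ m, F m ∧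
        ∀ n m : ℕ, ∀ t : Cantor, ¬ tAdd t (P n) ⊆ F m) : PMT X := by
  intro P hPperf hPne
  classical
  obtain ⟨e, he⟩ := exists_surjective_nat ((k : ℕ) × (Fin k → Bool))
  set cylS : ((k : ℕ) × (Fin k → Bool)) → Set Cantor :=
    fun a => cyl a.1 (fun i => if h : i < a.1 then a.2 ⟨i, h⟩ else false) with hcylS
  set Ps : ℕ → Set Cantor :=
    fun n => if (P ∩ cylS (e n)).Nonempty then P ∩ cylS (e n) else P with hPs
  have hPsprop : ∀ n, Perfect (Ps n) ∧ (Ps n).Nonempty := by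
    intro n
    simp only [hPs]
    by_cases hne : (P ∩ cylS (e n)).Nonempty
    · rw [if_pos hne]
      exact ⟨perfect_inter_cyl hPperf _ _, hne⟩
    · rw [if_neg hne]
      exact ⟨hPperf, hPne⟩
  obtain ⟨F, hFc, hXF, hnc⟩ := h Ps hPsprop
  refine ⟨⋃ m, F m, ⟨F, hFc, rfl⟩, hXF, ?_⟩
  intro t
  rw [preimage_iUnion]
  apply isMeagre_iUnion
  intro m
  have hclosed : IsClosed (Subtype.val ⁻¹' (F m) : Set (tAdd t P)) :=
    ((hFc m).isClosed).preimage continuous_subtype_val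
  have hND : IsNowhereDense (Subtype.val ⁻¹' (F m) : Set (tAdd t P)) := by
    rw [hclosed.isNowhereDense_iff, eq_empty_iff_forall_notMem]
    intro z hz
    have hmemnhds : (Subtype.val ⁻¹' (F m) : Set (tAdd t P)) ∈ 𝓝 z :=
      mem_interior_iff_mem_nhds.mp hz
    rw [mem_nhds_subtype] at hmemnhds
    obtain ⟨W, hW, hWsub⟩ := hmemnhds
    obtain ⟨O, hOW, hO, hzO⟩ := mem_nhds_iff.mp hW
    obtain ⟨k, hk⟩ := exists_cyl_subset hO hzO
    have hyP : cadd t (z : Cantor) ∈ P := mem_tAdd_iff.mp z.2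
    set q : Cantor := cadd t (z : Cantor) with hq
    obtain ⟨n0, hn0⟩ := he ⟨k, fun i => q i.1⟩
    have hcylSn : cylS (e n0) = cyl k q := by
      rw [hn0, hcylS]
      apply cyl_congr
      intro i hi
      simp [hi]
    have hqmem : q ∈ P ∩ cylS (e n0) := by
      rw [hcylSn]
      exact ⟨hyP, self_mem_cyl _ _⟩
    have hPs_eq : Ps n0 = P ∩ cyl k q := by
      simp only [hPs]
      rw [if_pos ⟨q, hqmem⟩, hcylSn]
    apply hnc n0 m t
    rw [hPs_eq]
    rintro x ⟨w, hw, rfl⟩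
    have h1 : cadd t w ∈ cyl k (z : Cantor) := by
      intro i hi
      show xor (t i) (w i) = (z : Cantor) i
      rw [hw.2 i hi]
      show xor (t i) (xor (t i) ((z : Cantor) i)) = (z : Cantor) i
      exact xor_self_xor _ _
    have h2 : cadd t w ∈ tAdd t P := ⟨w, hw.1, rfl⟩
    exact hWsub (mem_preimage.mpr (hOW (hk h1)) :
      (⟨cadd t w, h2⟩ : ↥(tAdd t P)) ∈ Subtype.val ⁻¹' W)
  rw [isMeagre_iff_countable_union_isNowhereDense]
  refine ⟨{Subtype.val ⁻¹' (F m)}, ?_, countable_singleton _, by simp⟩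
  rintro s hs
  rw [mem_singleton_iff] at hs
  rw [hs]
  exact hND

theorem stmt7 (X : Set Cantor) :
    PMT X ↔
      ∀ P : ℕ → Set Cantor, (∀ n, Perfect (P n) ∧ (P n).Nonempty) →
        ∃ F : ℕ → Set Cantor, (∀ m, IsCompact (F m)) ∧ X ⊆ ⋃ m, F m ∧
          ∀ n m : ℕ, ∀ t : Cantor, ¬ tAdd t (P n) ⊆ F m := by
  exact ⟨stmt7_forward X, stmt7_backward X⟩
end

section
/- If X is a λ'-subset of 2^ω × 2^ω that has the Hurewicz covering property, then X is totally imperfect, i.e., X contains no homeomorphic copy of the Cantor space. -/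
open Set Filter Topology MeasureTheory

theorem stmt8 (X : Set (Cantor × Cantor))
    (hlam : LambdaPrime X) (hH : Hurewicz X) :
    TotallyImperfect X := by
  intro P hPX hP
  by_contra hne
  rw [← Ne, ← nonempty_iff_ne_empty] at hne
  -- countable dense subset of the subtype ↥P
  haveI : CompactSpace ↥P :=
    isCompact_iff_compactSpace.mp (hP.closed.isCompact)
  haveI : Nonempty ↥P := hne.to_subtype
  obtain ⟨s, hs_count, hs_dense⟩ := TopologicalSpace.exists_countable_dense ↥P
  set A : Set (Cantor × Cantor) := Subtype.val '' s with hA_def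
  have hAP : A ⊆ P := by rintro a ⟨⟨x, hx⟩, _, rfl⟩; exact hx
  have hAc : A.Countable := hs_count.image _
  obtain ⟨G, hG, hXG⟩ := hlam A hAc
  have hAG : A ⊆ G := by
    intro a ha
    have : a ∈ (X ∪ A) ∩ G := by rw [hXG]; exact ha
    exact this.2
  have hPG : P ∩ G = A := by
    apply Subset.antisymm
    · intro a ⟨haP, haG⟩
      rw [← hXG]; exact ⟨Or.inl (hPX haP), haG⟩
    · exact fun a ha => ⟨hAP ha, hAG ha⟩
  -- work in the subtype
  set G' : Set ↥P := Subtype.val ⁻¹' G with hG'_def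
  have hG'Gδ : IsGδ G' := by
    obtain ⟨T, hTo, hTc, rfl⟩ := hG
    rw [hG'_def, preimage_sInter]
    exact IsGδ.biInter hTc fun t ht => ((hTo t ht).preimage continuous_subtype_val).isGδ
  have hG'A : G' = Subtype.val ⁻¹' A := by
    ext ⟨x, hx⟩
    simp only [hG'_def, mem_preimage]
    constructor
    · intro h; rw [← hPG]; exact ⟨hx, h⟩
    · intro h; exact hAG h
  have hG'dense : Dense G' := by
    apply hs_dense.mono
    intro x hx
    rw [hG'A]
    exact ⟨x, hx, rfl⟩
  -- G' is residual
  have hres : G' ∈ residual ↥P := residual_of_dense_Gδ hG'Gδ hG'dense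
  -- G' is countable
  have hG'count : G'.Countable := by
    rw [hG'A]; exact hAc.preimage Subtype.val_injective
  -- every point of ↥P is an accumulation point
  haveI hne_pt : ∀ a : ↥P, NeBot (𝓝[≠] a) := by
    rintro ⟨x, hx⟩
    have hacc : AccPt x (𝓟 P) := hP.acc x hx
    rw [AccPt] at hacc
    have hmap : Filter.map (Subtype.val : ↥P → Cantor × Cantor) (𝓝[≠] (⟨x, hx⟩ : ↥P)) =
        𝓝[Subtype.val '' {(⟨x, hx⟩ : ↥P)}ᶜ] x :=
      Topology.IsEmbedding.subtypeVal.map_nhdsWithin_eq _ _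
    have himg : (Subtype.val '' {(⟨x, hx⟩ : ↥P)}ᶜ) = P \ {x} := by
      ext y
      simp only [mem_image, mem_compl_iff, mem_singleton_iff, mem_diff, Subtype.ext_iff,
        Subtype.exists, exists_and_left]
      constructor
      · rintro ⟨z, hne, hz, rfl⟩
        exact ⟨hz, hne⟩
      · rintro ⟨hyP, hyne⟩
        exact ⟨y, hyne, hyP, rfl⟩
    rw [himg] at hmap
    have hnb : NeBot (𝓝[P \ {x}] x) := by
      have : P \ {x} = {x}ᶜ ∩ P := by rw [diff_eq, inter_comm]
      rw [this, nhdsWithin_inter']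
      exact hacc
    constructor
    intro h
    rw [← hmap, h, Filter.map_bot] at hnb
    exact hnb.ne' rfl
  -- countable set is meager in a perfect T1 space: complement is residual
  have hcompl : G'ᶜ ∈ residual ↥P := by
    have : G'ᶜ = ⋂ a ∈ G', ({a}ᶜ : Set ↥P) := by
      ext y
      simp only [mem_compl_iff, mem_iInter, mem_singleton_iff]
      constructor
      · intro h a ha hya
        exact h (hya ▸ ha)
      · intro h hy
        exact h y hy rfl
    rw [this]
    exact (countable_bInter_mem hG'count).mpr fun a _ =>
      residual_of_dense_open isOpen_compl_singleton (dense_compl_singleton a)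
  haveI : T2Space ↥P := inferInstance
  haveI : BaireSpace ↥P := BaireSpace.of_t2Space_locallyCompactSpace
  have hmem : G' ∩ G'ᶜ ∈ residual ↥P := inter_mem hres hcompl
  rw [inter_compl_self] at hmem
  exact absurd (dense_of_mem_residual hmem).nonempty (by simp)
end

section
/- If X ⊆ 2^ω is a set admitting a continuous map f : X → 2^ω whose image f[X] is not meager in 2^ω, then there is a homeomorphic copy Z of X in 2^ω which is not everywhere meager; that is, there is an infinite set b ⊆ ω such that Z_b := {z↾b : z ∈ Z} is not meager in 2^b. -/
open Set Filter Topology MeasureTheory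

noncomputable section

/-- merge: even coords from x, odd coords from y -/
def mrg (x y : Cantor) : Cantor := fun n => if n % 2 = 0 then x (n / 2) else y (n / 2)

lemma mrg_even (x y : Cantor) (n : ℕ) : mrg x y (2 * n) = x n := by
  simp [mrg, Nat.mul_mod_right, Nat.mul_div_cancel_left _ (by norm_num : (0:ℕ) < 2)]

lemma mrg_odd (x y : Cantor) (n : ℕ) : mrg x y (2 * n + 1) = y n := by
  simp [mrg, Nat.add_mul_mod_self_left, Nat.mul_add_div, Nat.mul_add_mod]

def oddSet : Set ℕ := {n | n % 2 = 1}

def oddEquiv : Cantor ≃ₜ (oddSet → Bool) where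
  toFun y := fun i => y (i.1 / 2)
  invFun w := fun n => w ⟨2 * n + 1, by show (2*n+1)%2=1; omega⟩
  left_inv y := by
    funext n
    simp [Nat.mul_add_div, Nat.mul_add_mod]
  right_inv w := by
    funext i
    obtain ⟨i, hi⟩ := i
    simp only [oddSet, Set.mem_setOf_eq] at hi
    obtain ⟨k, rfl⟩ : ∃ k, i = 2 * k + 1 := ⟨i / 2, by omega⟩
    have h2 : (2 * k + 1) / 2 = k := by omega
    simp [h2]
  continuous_toFun := by continuity
  continuous_invFun := by continuity

theorem stmt9 (X : Set Cantor) (f : X → Cantor)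
    (hf : Continuous f) (hmeager : ¬ IsMeagre (Set.range f)) :
    ∃ Z : Set Cantor, Nonempty (X ≃ₜ Z) ∧
      ∃ b : Set ℕ, b.Infinite ∧
        ¬ IsMeagre ((fun z : Cantor => fun i : b => z i) '' Z : Set (b → Bool)) := by
  classical
  set F : X → Cantor := fun x => mrg x.1 (f x) with hF
  have hFc : Continuous F := by
    apply continuous_pi
    intro n
    by_cases h : n % 2 = 0
    · simp only [hF, mrg, h, if_true]
      exact (continuous_apply _).comp continuous_subtype_val
    · simp only [hF, mrg, h, if_false]
      exact (continuous_apply _).comp hf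
  have hFe : IsEmbedding F := by
    have hρ : Continuous (fun z : Cantor => (fun n => z (2 * n) : Cantor)) := by continuity
    have hcomp : (fun z : Cantor => (fun n => z (2 * n) : Cantor)) ∘ F = Subtype.val := by
      funext x; funext n; simp [hF, mrg_even]
    exact IsEmbedding.of_comp hFc hρ (by rw [hcomp]; exact IsEmbedding.subtypeVal)
  refine ⟨Set.range F, ⟨hFe.toHomeomorph⟩, oddSet, ?_, ?_⟩
  · apply Set.infinite_of_injective_forall_mem (f := fun n => 2 * n + 1)
    · intro a b h; replace h : 2 * a + 1 = 2 * b + 1 := h; omega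
    · intro n; show (2*n+1)%2=1; omega
  · intro hM
    apply hmeager
    have key : (fun z : Cantor => fun i : oddSet => z i) '' (Set.range F)
        = oddEquiv '' (Set.range f) := by
      ext w
      simp only [Set.mem_image, Set.mem_range]
      constructor
      · rintro ⟨z, ⟨x, rfl⟩, rfl⟩
        refine ⟨f x, ⟨x, rfl⟩, ?_⟩
        funext i
        obtain ⟨i, hi⟩ := i
        simp only [oddSet, Set.mem_setOf_eq] at hi
        obtain ⟨k, rfl⟩ : ∃ k, i = 2 * k + 1 := ⟨i / 2, by omega⟩
        show oddEquiv (f x) _ = F x _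
        simp [oddEquiv, hF, mrg_odd, Nat.mul_add_div, Nat.mul_add_mod]
      · rintro ⟨y, ⟨x, rfl⟩, rfl⟩
        refine ⟨F x, ⟨x, rfl⟩, ?_⟩
        funext i
        obtain ⟨i, hi⟩ := i
        simp only [oddSet, Set.mem_setOf_eq] at hi
        obtain ⟨k, rfl⟩ : ∃ k, i = 2 * k + 1 := ⟨i / 2, by omega⟩
        show F x _ = oddEquiv (f x) _
        simp [oddEquiv, hF, mrg_odd, Nat.mul_add_div, Nat.mul_add_mod]
    rw [key] at hM
    have := hM.preimage_of_isOpenMap oddEquiv.continuous oddEquiv.isOpenMap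
    have heq : (⇑oddEquiv) ⁻¹' (⇑oddEquiv '' (Set.range f)) = Set.range f :=
      Set.preimage_image_eq _ oddEquiv.injective
    rwa [heq] at this
end
end

section
/- Let X ⊆ 2^ω × 2^ω be a Menger set and let (U_n)_{n∈ω} be a sequence of covers of X by sets open in 2^ω × 2^ω such that the set ⋂_n ⋃U_n has all vertical sections dense in 2^ω. Then there are finite sets F_n ⊆ U_n such that ⋃_n F_n covers X and the set ⋃_n ⋃F_n has all vertical sections dense in 2^ω. -/
open Set Filter Topology MeasureTheory

def cyl (y : Cantor) (n : ℕ) : Set Cantor := {z | ∀ i < n, z i = y i}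

lemma isOpen_cyl (y : Cantor) (n : ℕ) : IsOpen (cyl y n) := by
  have : cyl y n = ⋂ i ∈ Finset.range n, {z : Cantor | z i = y i} := by
    ext z; simp [cyl]
  rw [this]
  refine isOpen_biInter_finset fun i _ => ?_
  have : {z : Cantor | z i = y i} = (fun z : Cantor => z i) ⁻¹' {b | b = y i} := rfl
  rw [this]
  exact (isOpen_discrete _).preimage (continuous_apply i)

lemma mem_cyl_self (y : Cantor) (n : ℕ) : y ∈ cyl y n := fun _ _ => rfl

lemma dense_of_cyl {D : Set Cantor} (h : ∀ y n, ∃ z ∈ D, z ∈ cyl y n) : Dense D := by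
  intro y
  rw [mem_closure_iff]
  intro o ho hyo
  rcases isOpen_pi_iff.mp ho y hyo with ⟨I, u, hu, hsub⟩
  obtain ⟨z, hzD, hz⟩ := h y ((I.sup id) + 1)
  refine ⟨z, hsub ?_, hzD⟩
  intro i hi
  rw [hz i (Nat.lt_succ_of_le (Finset.le_sup (f := id) hi))]
  exact (hu i hi).2

lemma cyl_of_dense {D : Set Cantor} (h : Dense D) (y : Cantor) (n : ℕ) :
    ∃ z ∈ D, z ∈ cyl y n := by
  rcases mem_closure_iff.mp (h y) (cyl y n) (isOpen_cyl y n) (mem_cyl_self y n) with ⟨z, hz, hzD⟩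
  exact ⟨z, hzD, hz⟩

lemma open_cyl_sub {W : Set (Cantor × Cantor)} (hW : IsOpen W) {x y : Cantor}
    (h : (x, y) ∈ W) : ∃ n, ∀ x' y', x' ∈ cyl x n → y' ∈ cyl y n → (x', y') ∈ W := by
  rcases isOpen_prod_iff.mp hW x y h with ⟨A, B, hA, hB, hxA, hyB, hsub⟩
  rcases isOpen_pi_iff.mp hA x hxA with ⟨I, u, hu, hsubA⟩
  rcases isOpen_pi_iff.mp hB y hyB with ⟨J, v, hv, hsubB⟩
  refine ⟨max ((I.sup id)+1) ((J.sup id)+1), fun x' y' hx' hy' => ?_⟩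
  apply hsub
  constructor
  · apply hsubA; intro i hi
    show x' i ∈ u i
    rw [hx' i (lt_of_lt_of_le (Nat.lt_succ_of_le (Finset.le_sup (f := id) hi)) (le_max_left _ _))]
    exact (hu i hi).2
  · apply hsubB; intro i hi
    show y' i ∈ v i
    rw [hy' i (lt_of_lt_of_le (Nat.lt_succ_of_le (Finset.le_sup (f := id) hi)) (le_max_right _ _))]
    exact (hv i hi).2

lemma cyl_mono {x : Cantor} {k n : ℕ} (h : k ≤ n) : cyl x n ⊆ cyl x k :=
  fun _ hz i hi => hz i (lt_of_lt_of_le hi h)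

lemma isOpen_determined {S : Set (Cantor × Cantor)} (M : ℕ)
    (h : ∀ p q : Cantor × Cantor, p.1 ∈ cyl q.1 M → p.2 ∈ cyl q.2 M → q ∈ S → p ∈ S) :
    IsOpen S := by
  have hS : S = ⋃ q ∈ S, (cyl q.1 M ×ˢ cyl q.2 M) := by
    ext p
    constructor
    · intro hp
      exact mem_biUnion hp ⟨mem_cyl_self _ _, mem_cyl_self _ _⟩
    · intro hp
      rcases mem_iUnion₂.mp hp with ⟨q, hq, hp1, hp2⟩
      exact h p q hp1 hp2 hq
  rw [hS]
  exact isOpen_biUnion fun q _ => (isOpen_cyl _ _).prod (isOpen_cyl _ _)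

lemma isClosed_graphset (m l : ℕ) (β : Cantor → Cantor)
    (hβ : ∀ x x', x' ∈ cyl x m → β x = β x') :
    IsClosed {p : Cantor × Cantor | ∀ i < l, p.2 i = β p.1 i} := by
  rw [← isOpen_compl_iff]
  apply isOpen_determined (max m l)
  rintro p q hp1 hp2 hq
  simp only [mem_compl_iff, mem_setOf_eq, not_forall] at hq ⊢
  obtain ⟨i, hil, hine⟩ := hq
  refine ⟨i, hil, ?_⟩
  rw [hp2 i (lt_of_lt_of_le hil (le_max_right _ _)),
    ← hβ q.1 p.1 (cyl_mono (le_max_left m l) hp1)]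
  exact hine

lemma step (W : Set (Cantor × Cantor)) (hW : IsOpen W) (hd : ∀ x, Dense (sect W x))
    (m l t : ℕ) (β : Cantor → Cantor)
    (hβ : ∀ x x', x' ∈ cyl x m → β x = β x') :
    ∃ (m' l' : ℕ) (β' : Cantor → Cantor),
      l ≤ l' ∧ t ≤ l' ∧
      (∀ x x', x' ∈ cyl x m' → β' x = β' x') ∧
      (∀ x, ∀ i < l, β' x i = β x i) ∧
      (∀ x y, y ∈ cyl (β' x) l' → (x, y) ∈ W) := by
  have hY : ∀ x, ∃ y, y ∈ sect W x ∧ y ∈ cyl (β x) l := fun x => cyl_of_dense (hd x) (β x) l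
  choose Y hYW hYc using hY
  have hn : ∀ x, ∃ n, ∀ x' y', x' ∈ cyl x n → y' ∈ cyl (Y x) n → (x', y') ∈ W :=
    fun x => open_cyl_sub hW (hYW x)
  choose nn hnn using hn
  set N : Cantor → ℕ := fun x => max (nn x) m with hN
  obtain ⟨T, hT⟩ := isCompact_univ.elim_nhds_subcover (fun x => cyl x (N x))
    (fun x _ => (isOpen_cyl x (N x)).mem_nhds (mem_cyl_self x (N x)))
  set m' : ℕ := max (T.sup N) m with hm'
  set l' : ℕ := max m' (max l t) with hl'
  have hNm' : ∀ x ∈ T, N x ≤ m' := fun x hx => le_trans (Finset.le_sup hx) (le_max_left _ _)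
  -- canonical choice depending only on the first m' coordinates
  have hcov : ∀ r : Fin m' → Bool, ∃ x₀, x₀ ∈ T ∧
      (fun i => if h : i < m' then r ⟨i, h⟩ else false : Cantor) ∈ cyl x₀ (N x₀) := by
    intro r
    have := hT.2 (mem_univ (fun i => if h : i < m' then r ⟨i, h⟩ else false : Cantor))
    rcases mem_iUnion₂.mp this with ⟨x₀, hx₀, hmem⟩
    exact ⟨x₀, hx₀, hmem⟩
  choose pk hpk1 hpk2 using hcov
  set P : Cantor → Cantor := fun x => pk (fun i => x i) with hP
  have hPmem : ∀ x, x ∈ cyl (P x) (N (P x)) := by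
    intro x
    intro i hi
    have h2 := hpk2 (fun i : Fin m' => x i) i hi
    simpa [dif_pos (lt_of_lt_of_le hi (hNm' _ (hpk1 _)))] using h2
  refine ⟨m', l', fun x => Y (P x), le_trans (le_max_left l t) (le_max_right _ _),
    le_trans (le_max_right l t) (le_max_right _ _), ?_, ?_, ?_⟩
  · intro x x' hx'
    have : (fun i : Fin m' => x i) = (fun i : Fin m' => x' i) := by
      funext i; exact (hx' i i.2).symm
    simp only [hP, this]
  · intro x i hil
    show Y (P x) i = β x i
    have h1 : Y (P x) i = β (P x) i := hYc (P x) i hil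
    have h2 : β (P x) = β x :=
      hβ (P x) x (cyl_mono (le_max_right (nn (P x)) m) (hPmem x))
    rw [h1, h2]
  · intro x y hy
    apply hnn (P x) x y
    · exact cyl_mono (le_max_left (nn (P x)) m) (hPmem x)
    · exact cyl_mono (le_trans (le_trans (le_max_left (nn (P x)) m)
        (hNm' _ (hpk1 _))) (le_max_left _ _)) hy

def Cfg : Type := Σ' (m l : ℕ) (β : Cantor → Cantor), ∀ x x', x' ∈ cyl x m → β x = β x'

lemma seq (W : ℕ → Set (Cantor × Cantor)) (hW : ∀ n, IsOpen (W n))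
    (hd : ∀ n x, Dense (sect (W n) x)) (y₀ : Cantor) (N : ℕ) :
    ∃ (l : ℕ → ℕ) (β : ℕ → Cantor → Cantor) (m : ℕ → ℕ),
      l 0 = N ∧ β 0 = (fun _ => y₀) ∧
      (∀ n, l n ≤ l (n + 1)) ∧
      (∀ n, n + 1 ≤ l (n + 1)) ∧
      (∀ n x x', x' ∈ cyl x (m n) → β n x = β n x') ∧
      (∀ n x, ∀ i < l n, β (n + 1) x i = β n x i) ∧
      (∀ n x y, y ∈ cyl (β (n + 1) x) (l (n + 1)) → (x, y) ∈ W n) := by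
  have stepT : ∀ (n : ℕ) (c : Cfg), ∃ c' : Cfg,
      c.2.1 ≤ c'.2.1 ∧ n + 1 ≤ c'.2.1 ∧ (∀ x, ∀ i < c.2.1, c'.2.2.1 x i = c.2.2.1 x i) ∧
      (∀ x y, y ∈ cyl (c'.2.2.1 x) c'.2.1 → (x, y) ∈ W n) := by
    intro n c
    obtain ⟨m', l', β', h1, h2, h3, h4, h5⟩ :=
      step (W n) (hW n) (hd n) c.1 c.2.1 (n + 1) c.2.2.1 c.2.2.2
    exact ⟨⟨m', l', β', h3⟩, h1, h2, h4, h5⟩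
  choose nxt hx1 hx2 hx3 hx4 using stepT
  set g : ℕ → Cfg := fun n =>
    Nat.rec ⟨0, N, fun _ => y₀, fun _ _ _ => rfl⟩ (fun k ih => nxt k ih) n with hg
  have hsucc : ∀ n, g (n + 1) = nxt n (g n) := fun n => rfl
  refine ⟨fun n => (g n).2.1, fun n => (g n).2.2.1, fun n => (g n).1, rfl, rfl,
    ?_, ?_, ?_, ?_, ?_⟩
  · intro n; have h := hx1 n (g n); rwa [← hsucc n] at h
  · intro n; have h := hx2 n (g n); rwa [← hsucc n] at h
  · intro n; exact (g n).2.2.2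
  · intro n; have h := hx3 n (g n); rwa [← hsucc n] at h
  · intro n; have h := hx4 n (g n); rwa [← hsucc n] at h

lemma compactK (W : ℕ → Set (Cantor × Cantor)) (hW : ∀ n, IsOpen (W n))
    (hd : ∀ n x, Dense (sect (W n) x)) (y₀ : Cantor) (N : ℕ) :
    ∃ K : Set (Cantor × Cantor), IsCompact K ∧ (∀ n, K ⊆ W n) ∧
      (∀ p ∈ K, p.2 ∈ cyl y₀ N) ∧ (∀ x, ∃ y, (x, y) ∈ K) := by
  obtain ⟨l, β, m, hl0, hβ0, hmono, hge, hinv, hagree, hWm⟩ := seq W hW hd y₀ N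
  have hlm : Monotone l := monotone_nat_of_le_succ hmono
  set K : Set (Cantor × Cantor) := ⋂ n, {p : Cantor × Cantor | ∀ i < l n, p.2 i = β n p.1 i}
    with hK
  have hKcl : IsClosed K :=
    isClosed_iInter fun n => isClosed_graphset (m n) (l n) (β n) (hinv n)
  refine ⟨K, hKcl.isCompact, ?_, ?_, ?_⟩
  · intro n p hp
    have hp1 := mem_iInter.mp hp (n + 1)
    exact hWm n p.1 p.2 (fun i hi => hp1 i hi)
  · intro p hp
    have hp0 := mem_iInter.mp hp 0
    intro i hi
    have := hp0 i (by rw [hl0]; exact hi)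
    rw [this, hβ0]
  · intro x
    refine ⟨fun i => β (i + 1) x i, ?_⟩
    have chain : ∀ n i, i < l n → ∀ n', n ≤ n' → β n' x i = β n x i := by
      intro n i hi n' hn'
      induction n', hn' using Nat.le_induction with
      | base => rfl
      | succ k hk ih => rw [hagree k x i (lt_of_lt_of_le hi (hlm hk)), ih]
    apply mem_iInter.mpr
    intro n
    intro i hi
    show β (i + 1) x i = β n x i
    rcases le_or_gt (i + 1) n with h | h
    · exact (chain (i + 1) i (lt_of_lt_of_le (Nat.lt_succ_self i) (hge i)) n h).symm
    · exact chain n i hi (i + 1) (Nat.le_of_lt_succ (Nat.lt_succ_of_lt h))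

theorem stmt10 (X : Set (Cantor × Cantor)) (hX : Menger X)
    (U : ℕ → Set (Set (Cantor × Cantor)))
    (hopen : ∀ n, ∀ u ∈ U n, IsOpen u)
    (hcover : ∀ n, X ⊆ ⋃₀ U n)
    (hdense : ∀ x : Cantor, Dense (sect (⋂ n, ⋃₀ U n) x)) :
    ∃ F : ℕ → Set (Set (Cantor × Cantor)),
      (∀ n, F n ⊆ U n ∧ (F n).Finite) ∧
      X ⊆ ⋃ n, ⋃₀ F n ∧
      ∀ x : Cantor, Dense (sect (⋃ n, ⋃₀ F n) x) := by
  set W : ℕ → Set (Cantor × Cantor) := fun n => ⋃₀ U n with hWdef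
  have hWo : ∀ n, IsOpen (W n) := fun n => isOpen_sUnion (hopen n)
  have hWd : ∀ n x, Dense (sect (W n) x) := by
    intro n x
    apply (hdense x).mono
    intro y hy
    exact mem_iInter.mp hy n
  -- dense sequence in Cantor space
  have hsep : DenseRange (TopologicalSpace.denseSeq Cantor) :=
    TopologicalSpace.denseRange_denseSeq Cantor
  set d := TopologicalSpace.denseSeq Cantor with hd
  -- compact sets with sections hitting every cylinder
  have hKex : ∀ k M : ℕ, ∃ K : Set (Cantor × Cantor), IsCompact K ∧ (∀ n, K ⊆ W n) ∧
      (∀ p ∈ K, p.2 ∈ cyl (d k) M) ∧ (∀ x, ∃ y, (x, y) ∈ K) :=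
    fun k M => compactK W hWo hWd (d k) M
  choose K hKc hKW hKcyl hKsec using hKex
  -- Menger for X
  obtain ⟨F, hF, hFcov⟩ := hX U (fun n => ⟨hopen n, hcover n⟩)
  -- finite subcovers of each compact at each stage
  have hGex : ∀ n, ∃ G : Set (Set (Cantor × Cantor)), G ⊆ U n ∧ G.Finite ∧
      K n.unpair.1 n.unpair.2 ⊆ ⋃₀ G := by
    intro n
    have hsub : K n.unpair.1 n.unpair.2 ⊆ ⋃ u : U n, (u : Set (Cantor × Cantor)) := by
      intro p hp
      rcases hKW n.unpair.1 n.unpair.2 n hp with ⟨u, hu, hpu⟩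
      exact mem_iUnion.mpr ⟨⟨u, hu⟩, hpu⟩
    obtain ⟨t, ht⟩ := (hKc n.unpair.1 n.unpair.2).elim_finite_subcover
      (fun u : U n => (u : Set (Cantor × Cantor))) (fun u => hopen n u u.2) hsub
    refine ⟨Subtype.val '' (t : Set (U n)), ?_, (t.finite_toSet.image _), ?_⟩
    · rintro _ ⟨u, _, rfl⟩; exact u.2
    · intro p hp
      rcases mem_iUnion₂.mp (ht hp) with ⟨u, hu, hpu⟩
      exact ⟨u, ⟨u, hu, rfl⟩, hpu⟩
  choose G hG1 hG2 hG3 using hGex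
  refine ⟨fun n => F n ∪ G n, fun n => ⟨union_subset (hF n).1 (hG1 n),
    (hF n).2.union (hG2 n)⟩, ?_, ?_⟩
  · exact hFcov.trans (iUnion_mono fun n => sUnion_mono subset_union_left)
  · intro x
    apply dense_of_cyl
    intro y M
    obtain ⟨z, hzr, hz⟩ := cyl_of_dense hsep y M
    obtain ⟨k, rfl⟩ := hzr
    obtain ⟨y', hy'⟩ := hKsec k M x
    refine ⟨y', ?_, ?_⟩
    · show (x, y') ∈ ⋃ n, ⋃₀ (F n ∪ G n)
      apply mem_iUnion.mpr
      refine ⟨Nat.pair k M, ?_⟩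
      have h3 := hG3 (Nat.pair k M)
      rw [Nat.unpair_pair] at h3
      exact sUnion_mono subset_union_right (h3 hy')
    · intro i hi
      have h1 : y' i = d k i := hKcyl k M (x, y') hy' i hi
      rw [h1, hz i hi]
end

section
/- If X is a subset of a compact metrizable space K such that for every G_δ set G ⊆ K containing X there is an F_σ set F with X ⊆ F ⊆ G, and Y ⊆ X is an F_σ subset of X, then Y has the same property: for every G_δ set G' ⊆ K containing Y there is an F_σ set F' with Y ⊆ F' ⊆ G'. -/
open Set Filter Topology MeasureTheory

theorem stmt16 {K : Type*} [TopologicalSpace K] [CompactSpace K]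
    [TopologicalSpace.MetrizableSpace K]
    (X Y : Set K)
    (hX : ∀ G : Set K, IsGδ G → X ⊆ G → ∃ F : Set K, IsFSigma F ∧ X ⊆ F ∧ F ⊆ G)
    (hYX : Y ⊆ X) (hY : ∃ F : Set K, IsFSigma F ∧ Y = X ∩ F) :
    ∀ G' : Set K, IsGδ G' → Y ⊆ G' →
      ∃ F' : Set K, IsFSigma F' ∧ Y ⊆ F' ∧ F' ⊆ G' := by
  intro G' hG' hYG'
  obtain ⟨F, ⟨C, hCclosed, rfl⟩, hYeq⟩ := hY
  -- complement of Fσ is Gδ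
  have hFcGδ : IsGδ (⋃ n, C n)ᶜ := by
    rw [compl_iUnion]
    exact IsGδ.iInter fun n => ((hCclosed n).isOpen_compl).isGδ
  have hG : IsGδ (G' ∪ (⋃ n, C n)ᶜ) := hG'.union hFcGδ
  have hXG : X ⊆ G' ∪ (⋃ n, C n)ᶜ := by
    intro x hx
    by_cases hxF : x ∈ ⋃ n, C n
    · exact Or.inl (hYG' (hYeq ▸ ⟨hx, hxF⟩))
    · exact Or.inr hxF
  obtain ⟨F₀, ⟨D, hDclosed, rfl⟩, hXF₀, hF₀G⟩ := hX _ hG hXG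
  refine ⟨(⋃ n, D n) ∩ (⋃ n, C n), ?_, ?_, ?_⟩
  · refine ⟨fun n => D (Nat.unpair n).1 ∩ C (Nat.unpair n).2,
      fun n => (hDclosed _).inter (hCclosed _), ?_⟩
    ext x
    simp only [mem_inter_iff, mem_iUnion]
    constructor
    · rintro ⟨⟨i, hi⟩, ⟨j, hj⟩⟩
      exact ⟨Nat.pair i j, by simp [Nat.unpair_pair, hi, hj]⟩
    · rintro ⟨n, hx1, hx2⟩
      exact ⟨⟨_, hx1⟩, ⟨_, hx2⟩⟩
  · intro y hy
    have := hYeq ▸ hy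
    exact ⟨hXF₀ this.1, this.2⟩
  · rintro x ⟨hx1, hx2⟩
    rcases hF₀G hx1 with h | h
    · exact h
    · exact absurd hx2 h
end
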